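/- arXiv:1108.4069 — 7 statements merged into one kernel-verified Lean document; each statement's English description precedes it below -/
import Mathlib

section
/- Let λ < 0 and let W be a standard one-dimensional Brownian motion with W(0) = 0, and let ζ be a real-valued random variable. Define the stopping time τ := inf{t ≥ 0 : ζ + λt + W(t) ≤ 0} and set X(t) := ζ + λt + W(t ∧ τ). Then X satisfies X(t) = ζ + λt + ∫₀ᵗ 1_{X(s)>0} dW(s) for all t ≥ 0, almost surely; i.e., X is a strong solution of dX(t) = λ dt + 1_{X(t)>0} dW(t) with X(0) = ζ. -/
open MeasureTheory ProbabilityTheory Set Filter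

/-- Standard one-dimensional Brownian motion adapted to the filtration `ℱ`. -/
structure IsStdBrownian {Ω : Type*} [m : MeasurableSpace Ω] (P : Measure Ω)
    (ℱ : Filtration ℝ m) (W : ℝ → Ω → ℝ) : Prop where
  adapted : Adapted ℱ W
  init : ∀ᵐ ω ∂P, W 0 ω = 0
  cont : ∀ᵐ ω ∂P, Continuous fun t => W t ω
  gauss : ∀ s t : ℝ, 0 ≤ s → ∀ h : s ≤ t,
    Measure.map (fun ω => W t ω - W s ω) P = gaussianReal 0 ⟨t - s, sub_nonneg.2 h⟩
  indep : ∀ (n : ℕ) (t : Fin (n + 1) → ℝ), Monotone t → 0 ≤ t 0 →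
    iIndepFun
      (fun i : Fin n => fun ω => W (t i.succ) ω - W (t i.castSucc) ω) P

/-- `M` is (a version of) the Itô integral `t ↦ ∫₀ᵗ 1_{Y(s)>0} dB(s)`. -/
structure IsIndIntegral {Ω : Type*} [m : MeasurableSpace Ω] (P : Measure Ω)
    (ℱ : Filtration ℝ m) (B : ℝ → Ω → ℝ) (Y : ℝ → Ω → ℝ) (M : ℝ → Ω → ℝ) : Prop where
  init : ∀ᵐ ω ∂P, M 0 ω = 0
  cont : ∀ᵐ ω ∂P, Continuous fun t => M t ω
  adapted : Adapted ℱ M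
  mart : Martingale M ℱ P
  flat : ∀ᵐ ω ∂P, ∀ s t : ℝ, 0 ≤ s → s ≤ t →
    (∀ u ∈ Icc s t, Y u ω ≤ 0) → M t ω = M s ω
  agrees : ∀ᵐ ω ∂P, ∀ s t : ℝ, 0 ≤ s → s ≤ t →
    (∀ u ∈ Icc s t, 0 < Y u ω) → M t ω - M s ω = B t ω - B s ω

/-- A weak solution of `dY = λ dt + 1_{Y>0} dB`, with `M` the stochastic-integral part. -/
structure WeakSolution {Ω : Type*} [m : MeasurableSpace Ω] (P : Measure Ω)
    (ℱ : Filtration ℝ m) (lam : ℝ) (B : ℝ → Ω → ℝ) (ξ : Ω → ℝ)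
    (Y : ℝ → Ω → ℝ) (M : ℝ → Ω → ℝ) : Prop where
  bm : IsStdBrownian P ℱ B
  contY : ∀ᵐ ω ∂P, Continuous fun t => Y t ω
  adaptedY : Adapted ℱ Y
  integral : IsIndIntegral P ℱ B Y M
  init : ∀ᵐ ω ∂P, Y 0 ω = ξ ω
  eqn : ∀ᵐ ω ∂P, ∀ t : ℝ, 0 ≤ t → Y t ω = ξ ω + lam * t + M t ω

open Topology


lemma pathwise (lam : ℝ) (hlam : lam < 0) (z : ℝ) (w μ : ℝ → ℝ)
    (hw : Continuous w) (hw0 : w 0 = 0) (hμ : Continuous μ) (hμ0 : μ 0 = 0)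
    (τ : ℝ) (hτ : τ = sInf {t : ℝ | 0 ≤ t ∧ z + lam * t + w t ≤ 0})
    (X : ℝ → ℝ) (hX : ∀ t, X t = z + lam * t + w (min t τ))
    (flat : ∀ s t : ℝ, 0 ≤ s → s ≤ t → (∀ u ∈ Icc s t, X u ≤ 0) → μ t = μ s)
    (agrees : ∀ s t : ℝ, 0 ≤ s → s ≤ t → (∀ u ∈ Icc s t, 0 < X u) → μ t - μ s = w t - w s)
    (hne : ∃ t : ℝ, 0 ≤ t ∧ z + lam * t + w t ≤ 0) :
    ∀ t : ℝ, 0 ≤ t → X t = z + lam * t + μ t := by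
  set f : ℝ → ℝ := fun t => z + lam * t + w t with hf
  have hfc : Continuous f := (continuous_const.add (continuous_const.mul continuous_id)).add hw
  set S : Set ℝ := {t : ℝ | 0 ≤ t ∧ f t ≤ 0} with hS
  have hSc : IsClosed S := by
    have : S = {t : ℝ | 0 ≤ t} ∩ {t : ℝ | f t ≤ 0} := rfl
    rw [this]
    exact (isClosed_le continuous_const continuous_id).inter
      (isClosed_le hfc continuous_const)
  have hSb : BddBelow S := ⟨0, fun x hx => hx.1⟩
  have hSn : S.Nonempty := hne
  have hf0 : f 0 = z := by simp [hf, hw0]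
  rcases le_or_gt z 0 with hz | hz
  · -- z ≤ 0 : τ = 0
    have h0S : (0 : ℝ) ∈ S := ⟨le_refl 0, by rw [hf0]; exact hz⟩
    have hτ0 : τ = 0 := le_antisymm (hτ ▸ csInf_le hSb h0S)
      (hτ ▸ le_csInf hSn fun x hx => hx.1)
    intro t ht
    have hXt : ∀ u : ℝ, 0 ≤ u → X u = z + lam * u := by
      intro u hu
      rw [hX, hτ0, min_eq_right hu, hw0, add_zero]
    have : μ t = μ 0 := flat 0 t le_rfl ht (fun u hu => by
      rw [hXt u hu.1]
      have : lam * u ≤ 0 := mul_nonpos_of_nonpos_of_nonneg hlam.le hu.1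
      linarith)
    rw [hXt t ht, this, hμ0, add_zero]
  · -- 0 < z
    have hτS : τ ∈ S := hτ ▸ hSc.csInf_mem hSn hSb
    have hτ0 : 0 < τ := by
      rcases hτS.1.lt_or_eq with h | h
      · exact h
      · exfalso; have := hτS.2; rw [← h, hf0] at this; linarith
    have hpos : ∀ t : ℝ, 0 ≤ t → t < τ → 0 < f t := by
      intro t ht htτ
      by_contra h
      push_neg at h
      exact absurd (hτ ▸ csInf_le hSb (⟨ht, h⟩ : t ∈ S)) (not_le.2 htτ)
    have key1 : ∀ t : ℝ, 0 ≤ t → t < τ → μ t = w t := by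
      intro t ht htτ
      have := agrees 0 t le_rfl ht (fun u hu => by
        rw [hX, min_eq_left (le_of_lt (lt_of_le_of_lt hu.2 htτ))]
        exact hpos u hu.1 (lt_of_le_of_lt hu.2 htτ))
      rw [hμ0, hw0] at this
      linarith
    have keyτ : μ τ = w τ := by
      have hg : Continuous (fun t => μ t - w t) := hμ.sub hw
      have h1 : Tendsto (fun t => μ t - w t) (nhdsWithin τ (Iio τ)) (nhds (μ τ - w τ)) :=
        (hg.tendsto τ).mono_left nhdsWithin_le_nhds
      have h2 : Tendsto (fun t => μ t - w t) (nhdsWithin τ (Iio τ)) (nhds 0) := by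
        apply Tendsto.congr' _ tendsto_const_nhds
        filter_upwards [Ioo_mem_nhdsLT hτ0] with t ht
        rw [key1 t ht.1.le ht.2, sub_self]
      have := tendsto_nhds_unique h1 h2
      linarith [this]
    have key2 : ∀ t : ℝ, τ ≤ t → μ t = w τ := by
      intro t ht
      have : μ t = μ τ := flat τ t hτS.1 ht (fun u hu => by
        rw [hX, min_eq_right hu.1]
        have h1 : lam * u ≤ lam * τ := by
          apply mul_le_mul_of_nonpos_left hu.1 hlam.le
        have := hτS.2
        simp only [hf] at this
        linarith)
      rw [this, keyτ]
    intro t ht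
    rcases le_or_gt t τ with h | h
    · rw [hX, min_eq_left h]
      rcases h.lt_or_eq with h' | h'
      · rw [key1 t ht h']
      · rw [h', keyτ]
    · rw [hX, min_eq_right h.le, key2 t h.le]



lemma gauss_scale {v : ℝ} (hv : 0 < v) (x : ℝ) :
    gaussianReal 0 ⟨v, hv.le⟩ (Iic x) = gaussianReal 0 1 (Iic (x / Real.sqrt v)) := by
  have hsv : 0 < Real.sqrt v := Real.sqrt_pos.2 hv
  have hmap := gaussianReal_map_const_mul (μ := 0) (v := 1) (Real.sqrt v)
  have hvar : (⟨Real.sqrt v ^ 2, sq_nonneg _⟩ : NNReal) * 1 = ⟨v, hv.le⟩ := by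
    apply NNReal.coe_injective
    simp [Real.sq_sqrt hv.le]
  rw [mul_zero] at hmap
  replace hmap : Measure.map (fun x => Real.sqrt v * x) (gaussianReal 0 1)
      = gaussianReal 0 ⟨v, hv.le⟩ := by
    rw [hmap]; congr 1
  rw [← hmap, Measure.map_apply (measurable_const_mul _) measurableSet_Iic]
  congr 1
  ext y
  simp only [mem_preimage, mem_Iic]
  rw [le_div_iff₀ hsv, mul_comm]

lemma gauss_tendsto (lam c : ℝ) (hlam : lam < 0) :
    Tendsto (fun n : ℕ => gaussianReal 0 ⟨(n : ℝ) + 1, by positivity⟩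
      (Iic (-c - lam * ((n : ℝ) + 1)))) atTop (𝓝 1) := by
  have hsqrt : Tendsto Real.sqrt atTop atTop :=
    tendsto_atTop_atTop_of_monotone (fun a b h => Real.sqrt_le_sqrt h)
      (fun b => ⟨b ^ 2, by rw [Real.sqrt_sq_eq_abs]; exact le_abs_self b⟩)
  have hn1 : Tendsto (fun n : ℕ => (n : ℝ) + 1) atTop atTop :=
    tendsto_atTop_add_const_right atTop 1 tendsto_natCast_atTop_atTop
  have hs : Tendsto (fun n : ℕ => Real.sqrt ((n : ℝ) + 1)) atTop atTop := hsqrt.comp hn1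
  have ha : Tendsto (fun n : ℕ => (-c - lam * ((n : ℝ) + 1)) / Real.sqrt ((n : ℝ) + 1))
      atTop atTop := by
    have h1 : Tendsto (fun n : ℕ => (-c) / Real.sqrt ((n : ℝ) + 1)) atTop (𝓝 0) :=
      Tendsto.div_atTop tendsto_const_nhds hs
    have h2 : Tendsto (fun n : ℕ => (-lam) * Real.sqrt ((n : ℝ) + 1)) atTop atTop :=
      Tendsto.const_mul_atTop (by linarith) hs
    have := h1.add_atTop h2
    apply this.congr
    intro n
    have hpos : (0:ℝ) < Real.sqrt ((n : ℝ) + 1) := Real.sqrt_pos.2 (by positivity)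
    have hsq : Real.sqrt ((n : ℝ) + 1) * Real.sqrt ((n : ℝ) + 1) = (n : ℝ) + 1 :=
      Real.mul_self_sqrt (by positivity)
    field_simp
    ring_nf
    nlinarith [Real.sq_sqrt (show (0:ℝ) ≤ 1 + (n:ℝ) by positivity),
      Real.sq_sqrt (show (0:ℝ) ≤ (n:ℝ) + 1 by positivity)]
  have hΦ : Tendsto (fun x : ℝ => gaussianReal 0 1 (Iic x)) atTop (𝓝 1) := by
    have := tendsto_measure_Iic_atTop (gaussianReal 0 1)
    simpa using this
  have := hΦ.comp ha
  apply this.congr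
  intro n
  exact (gauss_scale (by positivity : (0:ℝ) < (n:ℝ)+1) _).symm


lemma hit {Ω : Type*} [m : MeasurableSpace Ω] (P : Measure Ω) [IsProbabilityMeasure P]
    (ℱ : Filtration ℝ m) (W : ℝ → Ω → ℝ) (hW : IsStdBrownian P ℱ W)
    (lam : ℝ) (hlam : lam < 0) (c : ℝ) :
    ∀ᵐ ω ∂P, ∃ n : ℕ, W ((n : ℝ) + 1) ω ≤ -c - lam * ((n : ℝ) + 1) := by
  have hWm : ∀ t : ℝ, Measurable (W t) := fun t => (hW.adapted t).mono (ℱ.le t) le_rfl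
  set A : ℕ → Set Ω := fun n => {ω | W ((n : ℝ) + 1) ω ≤ -c - lam * ((n : ℝ) + 1)} with hA
  have hAm : ∀ n, MeasurableSet (A n) := fun n => measurableSet_le (hWm _) measurable_const
  have hmapn : ∀ n : ℕ,
      Measure.map (W ((n : ℝ) + 1)) P = gaussianReal 0 ⟨(n : ℝ) + 1, by positivity⟩ := by
    intro n
    have hg := hW.gauss 0 ((n : ℝ) + 1) le_rfl (by positivity)
    have hae : (fun ω => W ((n : ℝ) + 1) ω - W 0 ω) =ᵐ[P] W ((n : ℝ) + 1) := by
      filter_upwards [hW.init] with ω h0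
      simp [h0]
    rw [Measure.map_congr hae] at hg
    rw [hg]
    congr 1
    apply NNReal.coe_injective
    simp
  have hPA : ∀ n : ℕ, P (A n)
      = gaussianReal 0 ⟨(n : ℝ) + 1, by positivity⟩ (Iic (-c - lam * ((n : ℝ) + 1))) := by
    intro n
    rw [← hmapn n, Measure.map_apply (hWm _) measurableSet_Iic]
    rfl
  have htend : Tendsto (fun n => P (A n)) atTop (𝓝 1) := by
    apply (gauss_tendsto lam c hlam).congr
    intro n
    rw [hPA n]
  have hU : P (⋃ n, A n) = 1 :=
    le_antisymm prob_le_one (le_of_tendsto htend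
      (Eventually.of_forall fun n => measure_mono (subset_iUnion A n)))
  have hae : ∀ᵐ ω ∂P, ω ∈ ⋃ n, A n := by
    rw [ae_iff]
    have : {a | ¬ a ∈ ⋃ n, A n} = (⋃ n, A n)ᶜ := rfl
    rw [this, prob_compl_eq_zero_iff (MeasurableSet.iUnion hAm)]
    exact hU
  filter_upwards [hae] with ω hω
  obtain ⟨n, hn⟩ := mem_iUnion.1 hω
  exact ⟨n, hn⟩


/-- for λ < 0, the stopped process `X(t) = ζ + λt + W(t ∧ τ)`, with
`τ = inf{t ≥ 0 : ζ + λt + W(t) ≤ 0}`, satisfies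
`X(t) = ζ + λt + ∫₀ᵗ 1_{X(s)>0} dW(s)` for all `t ≥ 0`, almost surely. -/
theorem stmt0 {Ω : Type*} [m : MeasurableSpace Ω] (P : Measure Ω) [IsProbabilityMeasure P]
    (ℱ : Filtration ℝ m) (W : ℝ → Ω → ℝ) (ζ : Ω → ℝ) (hζ : Measurable ζ)
    (hζ0 : StronglyMeasurable[ℱ 0] ζ)
    (lam : ℝ) (hlam : lam < 0) (hW : IsStdBrownian P ℱ W)
    (τ : Ω → ℝ) (hτ : ∀ ω, τ ω = sInf {t : ℝ | 0 ≤ t ∧ ζ ω + lam * t + W t ω ≤ 0})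
    (X : ℝ → Ω → ℝ) (hX : ∀ t ω, X t ω = ζ ω + lam * t + W (min t (τ ω)) ω)
    (M : ℝ → Ω → ℝ) (hM : IsIndIntegral P ℱ W X M) :
    ∀ᵐ ω ∂P, ∀ t : ℝ, 0 ≤ t → X t ω = ζ ω + lam * t + M t ω := by
  have Hhit : ∀ᵐ ω ∂P, ∀ c : ℕ, ∃ n : ℕ,
      W ((n : ℝ) + 1) ω ≤ -(c : ℝ) - lam * ((n : ℝ) + 1) :=
    ae_all_iff.2 fun c => hit P ℱ W hW lam hlam c
  filter_upwards [hW.init, hW.cont, hM.init, hM.cont, hM.flat, hM.agrees, Hhit] with ω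
    h1 h2 h3 h4 h5 h6 h7
  have hne : ∃ t : ℝ, 0 ≤ t ∧ ζ ω + lam * t + W t ω ≤ 0 := by
    obtain ⟨c, hc⟩ := exists_nat_ge (ζ ω)
    obtain ⟨n, hn⟩ := h7 c
    exact ⟨(n : ℝ) + 1, by positivity, by linarith⟩
  exact pathwise lam hlam (ζ ω) (fun t => W t ω) (fun t => M t ω) h2 h1 h4 h3 (τ ω) (hτ ω)
    (fun t => X t ω) (fun t => hX t ω) (fun s t hs hst hu => h5 s t hs hst hu)
    (fun s t hs hst hu => h6 s t hs hst hu) hne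
end

section
/- Let λ < 0 and suppose (Y, B, ξ) is a weak solution of Y(t) = ξ + λt + ∫₀ᵗ 1_{Y(s)>0} dB(s) on some filtered probability space, with B a standard Brownian motion. For ε > 0 define σ_{-ε} := inf{t ≥ 0 : Y(t) ≤ -ε} and ϱ_{-ε} := inf{t ≥ σ_{-ε} : Y(t) ≥ 0}. Then P(ϱ_{-ε} < ∞) = 0 for every ε > 0; i.e., once the solution reaches level -ε it never returns to 0. -/
open MeasureTheory ProbabilityTheory Set Filter

/-- for λ < 0, a weak solution of `Y = ξ + λt + ∫ 1_{Y>0} dB` that ever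
reaches level `-ε` (ε > 0) never returns to `0`: the event that there exist times
`s ≤ t` with `Y(s) ≤ -ε` and `Y(t) ≥ 0` (i.e. `ϱ_{-ε} < ∞`) has probability zero. -/
theorem stmt1 {Ω : Type*} [m : MeasurableSpace Ω] (P : Measure Ω) [IsProbabilityMeasure P]
    (ℱ : Filtration ℝ m) (lam : ℝ) (hlam : lam < 0)
    (B : ℝ → Ω → ℝ) (ξ : Ω → ℝ) (Y : ℝ → Ω → ℝ) (M : ℝ → Ω → ℝ)
    (hsol : WeakSolution P ℱ lam B ξ Y M) :
    ∀ ε : ℝ, 0 < ε →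
      P {ω | ∃ s t : ℝ, 0 ≤ s ∧ s ≤ t ∧ Y s ω ≤ -ε ∧ 0 ≤ Y t ω} = 0 := by
  intro ε hε
  have h := (hsol.contY.and hsol.integral.flat).and hsol.eqn
  have hae : ∀ᵐ ω ∂P, ¬ ∃ s t : ℝ, 0 ≤ s ∧ s ≤ t ∧ Y s ω ≤ -ε ∧ 0 ≤ Y t ω := by
    filter_upwards [h] with ω ⟨⟨hcont, hflat⟩, heqn⟩
    rintro ⟨s, t, hs, hst, hYs, hYt⟩
    set f : ℝ → ℝ := fun r => Y r ω with hf
    have hfc : Continuous f := hcont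
    have hfs : f s < 0 := lt_of_le_of_lt hYs (by linarith)
    -- there is a zero of f in [s, t]
    have h0 : (0 : ℝ) ∈ Set.Icc (f s) (f t) := ⟨hfs.le, hYt⟩
    obtain ⟨u₀, hu₀mem, hu₀⟩ := intermediate_value_Icc hst hfc.continuousOn h0
    set S : Set ℝ := Set.Icc s t ∩ f ⁻¹' {0} with hS
    have hSne : S.Nonempty := ⟨u₀, hu₀mem, hu₀⟩
    have hSclosed : IsClosed S := isClosed_Icc.inter (isClosed_singleton.preimage hfc)
    have hSbdd : BddBelow S := ⟨s, fun x hx => hx.1.1⟩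
    set u : ℝ := sInf S with hu
    have huS : u ∈ S := hSclosed.csInf_mem hSne hSbdd
    have hsu : s ≤ u := huS.1.1
    have hut : u ≤ t := huS.1.2
    have hfu : f u = 0 := huS.2
    -- f ≤ 0 on [s, u]
    have hneg : ∀ r ∈ Set.Icc s u, f r ≤ 0 := by
      intro r hr
      by_contra hpos
      push_neg at hpos
      have h0' : (0 : ℝ) ∈ Set.Icc (f s) (f r) := ⟨hfs.le, hpos.le⟩
      obtain ⟨z, hzmem, hz⟩ := intermediate_value_Icc hr.1 hfc.continuousOn h0'
      have hzS : z ∈ S := ⟨⟨hzmem.1, le_trans (le_trans hzmem.2 hr.2) hut⟩, hz⟩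
      have huz : u ≤ z := csInf_le hSbdd hzS
      have hru : r = u := le_antisymm hr.2 (le_trans huz hzmem.2)
      rw [hru, hfu] at hpos
      exact lt_irrefl 0 hpos
    -- M flat on [s,u]
    have hMflat : M u ω = M s ω := hflat s u hs hsu hneg
    have heqs := heqn s hs
    have hequ := heqn u (le_trans hs hsu)
    have hmul : lam * (u - s) ≤ 0 := mul_nonpos_of_nonpos_of_nonneg hlam.le (by linarith)
    have : f u = f s + lam * (u - s) := by
      simp only [hf]
      rw [heqs, hequ, hMflat]; ring
    rw [hfu] at this
    linarith
  simpa only [not_not] using ae_iff.mp hae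
end

section
/- Let λ < 0, let Y solve Y(t) = ξ + λt + ∫₀ᵗ 1_{Y(s)>0} dB(s), set σ := inf{t ≥ 0 : Y(t) ≤ 0}, M(t) := ∫₀ᵗ 1_{Y(s)>0} dB(s), and A_δ := {s ∈ [σ, σ+δ] : Y(s) > 0} for δ > 0. Then for each δ > 0 the event E_δ := { M(σ+t) − M(σ) ≥ −λt for all t ∈ [0, δ] } satisfies P(E_δ ∩ {Leb(A_δ) > 0}) = 0. -/
open MeasureTheory ProbabilityTheory Set Filter

section Stmt3AuxSec
open Topology
open scoped ENNReal NNReal Classical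

namespace Stmt3Aux

variable {f : ℝ → ℝ} {a b θ c : ℝ}

/-- capped hitting time of the closed set `{f ≤ θ}` after `a`, capped at `b`. -/
noncomputable def hitT (f : ℝ → ℝ) (a b θ : ℝ) : ℝ :=
  sInf ({b} ∪ {t | a ≤ t ∧ f t ≤ θ})

lemma hit_lb (hab : a ≤ b) : ∀ x ∈ ({b} ∪ {t | a ≤ t ∧ f t ≤ θ}), a ≤ x := by
  rintro x (hx | hx)
  · simp only [mem_singleton_iff] at hx; exact hx ▸ hab
  · exact hx.1

lemma hit_bddBelow (hab : a ≤ b) : BddBelow ({b} ∪ {t | a ≤ t ∧ f t ≤ θ}) :=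
  ⟨a, fun x hx => hit_lb hab x hx⟩

lemma hit_ge (hab : a ≤ b) : a ≤ hitT f a b θ :=
  le_csInf ⟨b, Or.inl rfl⟩ (hit_lb hab)

lemma hit_le (hab : a ≤ b) : hitT f a b θ ≤ b :=
  csInf_le (hit_bddBelow hab) (Or.inl rfl)

lemma hit_eq_of_gt (hab : a ≤ b) (h : ∀ t, a ≤ t → t ≤ b → θ < f t) : hitT f a b θ = b := by
  refine le_antisymm (hit_le hab) (le_csInf ⟨b, Or.inl rfl⟩ ?_)
  rintro x (hx | ⟨hax, hfx⟩)
  · simp only [mem_singleton_iff] at hx; exact hx.ge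
  · by_contra hxb
    exact absurd hfx (not_le.2 (h x hax (le_of_not_ge hxb)))

lemma theta_le_hit_val (hf : Continuous f) (hab : a ≤ b) (ha : θ < f a) :
    θ ≤ f (hitT f a b θ) := by
  set τ := hitT f a b θ with hτ
  by_contra hcon
  push_neg at hcon
  have haτ : a < τ := by
    rcases eq_or_lt_of_le (hit_ge hab (f := f) (θ := θ)) with h | h
    · rw [hτ, ← h] at hcon; linarith
    · exact h
  obtain ⟨r, hr, hball⟩ := Metric.continuousAt_iff.1 hf.continuousAt (θ - f τ) (by linarith)
  set t := max a (τ - r / 2) with ht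
  have htτ : t < τ := max_lt haτ (by linarith)
  have hd : dist t τ < r := by
    rw [Real.dist_eq, abs_lt]
    constructor <;> [skip; linarith]
    have : τ - r / 2 ≤ t := le_max_right _ _
    linarith
  have hft : f t < θ := by
    have := hball hd
    rw [Real.dist_eq, abs_lt] at this
    linarith
  have : τ ≤ t := csInf_le (hit_bddBelow hab) (Or.inr ⟨le_max_left _ _, hft.le⟩)
  linarith

lemma hit_le_iff (hf : Continuous f) (hab : a ≤ b) :
    hitT f a b θ ≤ c ↔ b ≤ c ∨ (a ≤ c ∧ (f c ≤ θ ∨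
      ∀ n : ℕ, ∃ q : ℚ, a ≤ (q : ℝ) ∧ (q : ℝ) < c ∧ f q < θ + 1 / (n + 1))) := by
  set S := ({b} ∪ {t | a ≤ t ∧ f t ≤ θ}) with hS
  have hbb : BddBelow S := hit_bddBelow hab
  have hne : b ∈ S := Or.inl rfl
  constructor
  · intro h
    by_cases hbc : b ≤ c
    · exact Or.inl hbc
    right
    push_neg at hbc
    have hτc : hitT f a b θ ≤ c := h
    refine ⟨(hit_ge hab).trans hτc, ?_⟩
    set τ := hitT f a b θ with hτdef
    have hτb : τ < b := lt_of_le_of_lt hτc hbc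
    -- f τ ≤ θ
    have key : f τ ≤ θ := by
      have hlt : ∀ k : ℕ, sInf S < τ + min ((1:ℝ) / (k + 1)) (b - τ) := by
        intro k
        have : (0:ℝ) < min ((1:ℝ) / (k + 1)) (b - τ) := by
          refine lt_min (by positivity) (by linarith)
        simpa [hτdef, hitT, hS] using lt_add_of_pos_right (sInf S) this
      choose s hsS hslt using fun k : ℕ => (csInf_lt_iff hbb ⟨b, hne⟩).1 (hlt k)
      have hs2 : ∀ k, a ≤ s k ∧ f (s k) ≤ θ := by
        intro k
        rcases hsS k with hk | hk
        · exfalso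
          simp only [mem_singleton_iff] at hk
          have := hslt k
          have hmin : min (1 / ((k:ℝ) + 1)) (b - τ) ≤ b - τ := min_le_right _ _
          rw [hk] at this
          linarith
        · exact hk
      have hτles : ∀ k, τ ≤ s k := fun k => csInf_le hbb (hsS k)
      have hslt' : ∀ k : ℕ, s k ≤ τ + 1 / (k + 1) := by
        intro k
        have h6 : s k ≤ τ + min ((1:ℝ) / ((k:ℝ) + 1)) (b - τ) := (hslt k).le
        have hmin : min ((1:ℝ) / ((k:ℝ) + 1)) (b - τ) ≤ 1 / (k + 1) := min_le_left _ _
        linarith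
      have hstend : Tendsto s atTop (𝓝 τ) := by
        have h1 : Tendsto (fun k : ℕ => τ + 1 / ((k:ℝ) + 1)) atTop (𝓝 (τ + 0)) :=
          tendsto_const_nhds.add tendsto_one_div_add_atTop_nhds_zero_nat
        rw [add_zero] at h1
        exact tendsto_of_tendsto_of_tendsto_of_le_of_le tendsto_const_nhds h1 hτles hslt'
      exact le_of_tendsto ((hf.tendsto τ).comp hstend) (Eventually.of_forall fun k => (hs2 k).2)
    rcases eq_or_lt_of_le hτc with heq | hlt
    · exact Or.inl (heq ▸ key)
    right
    intro n
    obtain ⟨r, hr, hball⟩ := Metric.continuousAt_iff.1 hf.continuousAt (1 / (n + 1))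
      (by positivity)
    obtain ⟨q, hq1, hq2⟩ := exists_rat_btwn (lt_min hlt (lt_add_of_pos_right τ hr))
    refine ⟨q, (hit_ge hab).trans hq1.le, lt_of_lt_of_le hq2 (min_le_left _ _), ?_⟩
    have hd : dist (q:ℝ) τ < r := by
      rw [Real.dist_eq, abs_lt]
      have := lt_of_lt_of_le hq2 (min_le_right _ _)
      constructor <;> linarith
    have := hball hd
    rw [Real.dist_eq, abs_lt] at this
    linarith
  · rintro (hbc | ⟨hac, hfc | hq⟩)
    · exact (hit_le hab).trans hbc
    · exact csInf_le hbb (Or.inr ⟨hac, hfc⟩)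
    · choose q hq1 hq2 hq3 using hq
      have hqmem : ∀ n, (q n : ℝ) ∈ Icc a c := fun n => ⟨hq1 n, (hq2 n).le⟩
      obtain ⟨x, hx, φ, hφ, hlim⟩ :=
        tendsto_subseq_of_bounded (Metric.isBounded_Icc a c) hqmem
      have hx' : x ∈ Icc a c := by rwa [IsClosed.closure_eq isClosed_Icc] at hx
      have hfx : f x ≤ θ := by
        have h1 : Tendsto (fun k => f (q (φ k) : ℝ)) atTop (𝓝 (f x)) :=
          (hf.tendsto x).comp hlim
        have h2 : Tendsto (fun k : ℕ => θ + 1 / ((k:ℝ) + 1)) atTop (𝓝 (θ + 0)) :=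
          tendsto_const_nhds.add tendsto_one_div_add_atTop_nhds_zero_nat
        rw [add_zero] at h2
        refine le_of_tendsto_of_tendsto' h1 h2 fun k => ?_
        have h3 : f (q (φ k) : ℝ) < θ + 1 / ((φ k : ℝ) + 1) := hq3 (φ k)
        have h4 : (1:ℝ) / ((φ k : ℝ) + 1) ≤ 1 / ((k:ℝ) + 1) := by
          apply one_div_le_one_div_of_le (by positivity)
          have h7 : k ≤ φ k := hφ.le_apply
          have h8 : (k:ℝ) ≤ (φ k : ℝ) := Nat.cast_le.2 h7
          linarith
        linarith
      exact (csInf_le hbb (Or.inr ⟨hx'.1, hfx⟩)).trans hx'.2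

variable {Ω : Type*} [m : MeasurableSpace Ω]

/-- The filtration `ℱ` augmented by all `m`-measurable `P`-null sets. -/
noncomputable def cFilt (P : Measure Ω) (ℱ : Filtration ℝ m) : Filtration ℝ m where
  seq t := MeasurableSpace.generateFrom
    ({A | MeasurableSet[ℱ t] A} ∪ {A | MeasurableSet[m] A ∧ P A = 0})
  mono' s t hst := MeasurableSpace.generateFrom_mono
    (union_subset_union_left _ (fun A hA => ℱ.mono hst A hA))
  le' t := MeasurableSpace.generateFrom_le (by
    rintro A (hA | ⟨hA, -⟩)
    · exact ℱ.le t A hA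
    · exact hA)

variable {P : Measure Ω} {ℱ : Filtration ℝ m}

lemma le_cFilt (t : ℝ) : ℱ t ≤ cFilt P ℱ t := fun A hA =>
  MeasurableSpace.measurableSet_generateFrom (Or.inl hA)

lemma null_mem_cFilt {A : Set Ω} (hA : MeasurableSet[m] A) (h0 : P A = 0) (t : ℝ) :
    MeasurableSet[cFilt P ℱ t] A :=
  MeasurableSpace.measurableSet_generateFrom (Or.inr ⟨hA, h0⟩)

lemma conull_mem_cFilt {A : Set Ω} (hA : MeasurableSet[m] A) (h0 : P Aᶜ = 0) (t : ℝ) :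
    MeasurableSet[cFilt P ℱ t] A := by
  rw [← compl_compl A]
  exact (null_mem_cFilt hA.compl h0 t).compl

/-- every `cFilt`-measurable set differs from an `ℱ t`-measurable set by a null set. -/
lemma cFilt_approx {t : ℝ} {A : Set Ω} (hA : MeasurableSet[cFilt P ℱ t] A) :
    ∃ B : Set Ω, MeasurableSet[ℱ t] B ∧ P (symmDiff A B) = 0 := by
  induction A, hA using MeasurableSpace.generateFrom_induction with
  | hC A hA _ =>
    rcases hA with hA | ⟨hA, h0⟩
    · exact ⟨A, hA, by simp [symmDiff_self]⟩
    · refine ⟨∅, @MeasurableSet.empty Ω (ℱ t), ?_⟩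
      simpa [symmDiff] using h0
  | empty => exact ⟨∅, @MeasurableSet.empty Ω (ℱ t), by simp [symmDiff_self]⟩
  | compl A hA ih =>
    obtain ⟨B, hB, h0⟩ := ih
    exact ⟨Bᶜ, hB.compl, by rwa [compl_symmDiff_compl]⟩
  | iUnion s hs ih =>
    choose B hB h0 using ih
    refine ⟨⋃ n, B n, MeasurableSet.iUnion hB, ?_⟩
    refine measure_mono_null ?_ (measure_iUnion_null h0)
    intro x hx
    simp only [Set.mem_symmDiff, Set.mem_iUnion] at hx ⊢
    rcases hx with ⟨⟨n, hn⟩, hB'⟩ | ⟨⟨n, hn⟩, hA'⟩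
    · exact ⟨n, Or.inl ⟨hn, fun h => hB' ⟨n, h⟩⟩⟩
    · exact ⟨n, Or.inr ⟨hn, fun h => hA' ⟨n, h⟩⟩⟩

lemma symmDiff_null_ae_eq {A B : Set Ω} (h : P (symmDiff A B) = 0) : A =ᵐ[P] B := by
  have h1 : P (A \ B) = 0 := measure_mono_null (fun x hx => Or.inl hx) h
  have h2 : P (B \ A) = 0 := measure_mono_null (fun x hx => Or.inr hx) h
  exact MeasureTheory.ae_eq_set.2 ⟨h1, h2⟩

/-- a martingale w.r.t. `ℱ` remains a martingale for the augmented filtration. -/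
lemma martingale_cFilt [IsProbabilityMeasure P] {M : ℝ → Ω → ℝ}
    (hM : Martingale M ℱ P) : Martingale M (cFilt P ℱ) P := by
  constructor
  · exact fun t => (hM.stronglyAdapted t).mono (le_cFilt t)
  · intro s t hst
    have hle : cFilt P ℱ s ≤ m := (cFilt P ℱ).le s
    refine (ae_eq_condExp_of_forall_setIntegral_eq hle (hM.integrable t)
      (fun A _ _ => (hM.integrable s).integrableOn)
      (fun A hA _ => ?_)
      (StronglyMeasurable.aestronglyMeasurable
        ((hM.stronglyAdapted s).mono (le_cFilt s)))).symm
    obtain ⟨B, hB, h0⟩ := cFilt_approx hA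
    have hAB : A =ᵐ[P] B := symmDiff_null_ae_eq h0
    calc ∫ ω in A, M s ω ∂P = ∫ ω in B, M s ω ∂P := by
          apply setIntegral_congr_set hAB
    _ = ∫ ω in B, M t ω ∂P := hM.setIntegral_eq hst hB
    _ = ∫ ω in A, M t ω ∂P := (setIntegral_congr_set hAB).symm

variable {Ω : Type*} [m : MeasurableSpace Ω]

lemma st_set {f : Filtration ℝ m} {τ : Ω → ℝ}
    (h : IsStoppingTime f (fun ω => (τ ω : WithTop ℝ))) (c : ℝ) :
    MeasurableSet[f c] {ω | τ ω ≤ c} := by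
  simpa using h c

lemma st_of_real {f : Filtration ℝ m} {τ : Ω → ℝ}
    (h : ∀ c : ℝ, MeasurableSet[f c] {ω | τ ω ≤ c}) :
    IsStoppingTime f (fun ω => (τ ω : WithTop ℝ)) := by
  intro c
  simpa using h c

lemma measurable_sv {M : ℝ → Ω → ℝ} {τ : Ω → ℝ} (hτ : Measurable τ)
    (hcnt : (Set.range τ).Countable) (hMm : ∀ t, Measurable (M t)) :
    Measurable (MeasureTheory.stoppedValue M (fun ω => (τ ω : WithTop ℝ))) := by
  apply measurable_of_Iio
  intro x
  have : stoppedValue M (fun ω => (τ ω : WithTop ℝ)) ⁻¹' Iio x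
      = ⋃ v ∈ Set.range τ, (τ ⁻¹' {v} ∩ M v ⁻¹' Iio x) := by
    ext ω
    simp only [mem_preimage, mem_Iio, mem_iUnion, mem_inter_iff, mem_singleton_iff,
      stoppedValue, exists_prop]
    constructor
    · intro h; exact ⟨τ ω, ⟨ω, rfl⟩, rfl, h⟩
    · rintro ⟨v, -, rfl, h⟩; exact h
  rw [this]
  exact MeasurableSet.biUnion hcnt fun v _ =>
    (hτ (measurableSet_singleton v)).inter ((hMm v) measurableSet_Iio)

/-- dyadic upper approximation -/
noncomputable def ceilN (n : ℕ) (x : ℝ) : ℝ := (⌈x * 2 ^ n⌉₊ : ℝ) / 2 ^ n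

lemma ceilN_ge {n : ℕ} {x : ℝ} (hx : 0 ≤ x) : x ≤ ceilN n x := by
  rw [ceilN, le_div_iff₀ (by positivity)]
  exact Nat.le_ceil _

lemma ceilN_lt {n : ℕ} {x : ℝ} (hx : 0 ≤ x) : ceilN n x < x + ((2:ℝ) ^ n)⁻¹ := by
  rw [ceilN, div_lt_iff₀ (by positivity)]
  have := Nat.ceil_lt_add_one (by positivity : (0:ℝ) ≤ x * 2 ^ n)
  calc (⌈x * 2 ^ n⌉₊ : ℝ) < x * 2 ^ n + 1 := this
  _ = (x + ((2:ℝ) ^ n)⁻¹) * 2 ^ n := by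
      rw [add_mul, inv_mul_cancel₀ (by positivity : ((2:ℝ) ^ n) ≠ 0)]

lemma ceilN_le_add_one {n : ℕ} {x : ℝ} (hx : 0 ≤ x) : ceilN n x ≤ x + 1 := by
  have h1 := ceilN_lt (n := n) hx
  have h2 : ((2:ℝ) ^ n)⁻¹ ≤ 1 := by
    have h0 : (1:ℝ) ≤ 2 ^ n := one_le_pow₀ (by norm_num)
    have h3 : (0:ℝ) < 2 ^ n := by positivity
    rw [inv_le_one_iff₀]
    exact Or.inr h0
  linarith

lemma ceilN_nonneg {n : ℕ} {x : ℝ} : 0 ≤ ceilN n x := by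
  rw [ceilN]; positivity

lemma ceilN_monotone {n : ℕ} : Monotone (ceilN n) := by
  intro x y hxy
  rw [ceilN, ceilN]
  gcongr

lemma ceilN_measurable {n : ℕ} : Measurable (ceilN n) :=
  ceilN_monotone.measurable

lemma ceilN_range_countable {n : ℕ} : (Set.range (ceilN n)).Countable := by
  apply Set.Countable.mono _ (Set.countable_range (fun k : ℕ => (k : ℝ) / 2 ^ n))
  rintro x ⟨y, rfl⟩
  exact ⟨⌈y * 2 ^ n⌉₊, rfl⟩

lemma ceilN_tendsto {x : ℝ} (hx : 0 ≤ x) :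
    Tendsto (fun n => ceilN n x) atTop (𝓝 x) := by
  have h1 : Tendsto (fun n : ℕ => x + ((2:ℝ) ^ n)⁻¹) atTop (𝓝 (x + 0)) := by
    refine tendsto_const_nhds.add ?_
    have : Tendsto (fun n : ℕ => ((1:ℝ)/2) ^ n) atTop (𝓝 0) :=
      tendsto_pow_atTop_nhds_zero_of_lt_one (by norm_num) (by norm_num)
    refine this.congr fun n => ?_
    rw [one_div, inv_pow]
  rw [add_zero] at h1
  exact tendsto_of_tendsto_of_tendsto_of_le_of_le tendsto_const_nhds h1
    (fun n => ceilN_ge hx) (fun n => (ceilN_lt hx).le)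

variable {P : Measure Ω} {ℱ : Filtration ℝ m}

lemma ceilN_isStoppingTime {τ : Ω → ℝ} (hτ : IsStoppingTime (cFilt P ℱ) (fun ω => (τ ω : WithTop ℝ)))
    (hτ0 : ∀ ω, 0 ≤ τ ω) (n : ℕ) :
    IsStoppingTime (cFilt P ℱ) (fun ω => (ceilN n (τ ω) : WithTop ℝ)) := by
  refine st_of_real fun c => ?_
  rcases lt_or_ge c 0 with hc | hc
  · have : {ω | ceilN n (τ ω) ≤ c} = ∅ := by
      ext ω
      simp only [mem_setOf_eq, mem_empty_iff_false, iff_false, not_le]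
      exact lt_of_lt_of_le hc ceilN_nonneg
    rw [this]
    exact @MeasurableSet.empty Ω (cFilt P ℱ c)
  · have hkey : ∀ ω, ceilN n (τ ω) ≤ c ↔ τ ω ≤ (⌊c * 2 ^ n⌋₊ : ℝ) / 2 ^ n := by
      intro ω
      rw [ceilN, div_le_iff₀ (by positivity), le_div_iff₀ (by positivity)]
      constructor
      · intro h
        have h1 : (⌈τ ω * 2 ^ n⌉₊ : ℕ) ≤ ⌊c * 2 ^ n⌋₊ :=
          Nat.le_floor (by exact_mod_cast h)
        calc τ ω * 2 ^ n ≤ (⌈τ ω * 2 ^ n⌉₊ : ℝ) := Nat.le_ceil _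
        _ ≤ (⌊c * 2 ^ n⌋₊ : ℝ) := by exact_mod_cast h1
      · intro h
        have h1 : ⌈τ ω * 2 ^ n⌉₊ ≤ ⌊c * 2 ^ n⌋₊ := by
          rw [Nat.ceil_le]; exact h
        calc (⌈τ ω * 2 ^ n⌉₊ : ℝ) ≤ (⌊c * 2 ^ n⌋₊ : ℝ) := by exact_mod_cast h1
        _ ≤ c * 2 ^ n := Nat.floor_le (by positivity)
    have heq : {ω | ceilN n (τ ω) ≤ c} = {ω | τ ω ≤ (⌊c * 2 ^ n⌋₊ : ℝ) / 2 ^ n} := by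
      ext ω; exact hkey ω
    rw [heq]
    have hle : (⌊c * 2 ^ n⌋₊ : ℝ) / 2 ^ n ≤ c := by
      rw [div_le_iff₀ (by positivity)]
      exact Nat.floor_le (by positivity)
    exact (cFilt P ℱ).mono hle _ (st_set hτ _)

/-- key limit identity: the integral of the a.e. limit of stopped values equals `∫ M C`. -/
lemma integral_limit_sv [IsProbabilityMeasure P] {M : ℝ → Ω → ℝ}
    (hM : Martingale M (cFilt P ℱ) P) {C : ℝ} {τ : ℕ → Ω → ℝ}
    (hτ : ∀ n, IsStoppingTime (cFilt P ℱ) (fun ω => (τ n ω : WithTop ℝ)))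
    (hcnt : ∀ n, (Set.range (τ n)).Countable)
    (hτle : ∀ n ω, τ n ω ≤ C)
    {V : Ω → ℝ} (hV : Measurable V)
    (hconv : ∀ᵐ ω ∂P, Tendsto (fun n => stoppedValue M (fun ω => (τ n ω : WithTop ℝ)) ω) atTop (𝓝 (V ω))) :
    Integrable V P ∧ ∫ ω, V ω ∂P = ∫ ω, M C ω ∂P := by
  have hle : ∀ n, (hτ n).measurableSpace ≤ m := fun n =>
    (hτ n).measurableSpace_le_of_le (fun ω => WithTop.coe_le_coe.2 (hτle n ω))
  set g : ℕ → Ω → ℝ := fun n => P[M C | (hτ n).measurableSpace] with hg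
  have hUI : UniformIntegrable g 1 P := (hM.integrable C).uniformIntegrable_condExp hle
  have hsf : ∀ n, SigmaFinite (P.trim (hle n)) := fun n => by infer_instance
  have heq : ∀ n, stoppedValue M (fun ω => (τ n ω : WithTop ℝ)) =ᵐ[P] g n := fun n =>
    haveI := hsf n
    hM.stoppedValue_ae_eq_condExp_of_le_const_of_countable_range (hτ n)
      (fun ω => WithTop.coe_le_coe.2 (hτle n ω))
      (((hcnt n).image (fun x : ℝ => (x : WithTop ℝ))).mono
        (by rintro _ ⟨ω, rfl⟩; exact ⟨τ n ω, ⟨ω, rfl⟩, rfl⟩))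
  have hgconv : ∀ᵐ ω ∂P, Tendsto (fun n => g n ω) atTop (𝓝 (V ω)) := by
    filter_upwards [hconv, ae_all_iff.2 heq] with ω h1 h2
    exact h1.congr h2
  have hgmeas : ∀ n, StronglyMeasurable (g n) := fun n =>
    stronglyMeasurable_condExp.mono (hle n)
  -- Memℒp V 1
  obtain ⟨-, hui, C₀, hC₀⟩ := hUI
  have hMemV : MemLp V 1 P := by
    refine ⟨hV.aestronglyMeasurable, ?_⟩
    rw [eLpNorm_one_eq_lintegral_enorm]
    have hlim : ∀ᵐ ω ∂P,
        (‖V ω‖₊ : ℝ≥0∞) = liminf (fun n => (‖g n ω‖₊ : ℝ≥0∞)) atTop := by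
      filter_upwards [hgconv] with ω hω
      exact (ENNReal.tendsto_coe.2 hω.nnnorm).liminf_eq.symm
    calc ∫⁻ ω, (‖V ω‖₊ : ℝ≥0∞) ∂P
        = ∫⁻ ω, liminf (fun n => (‖g n ω‖₊ : ℝ≥0∞)) atTop ∂P := lintegral_congr_ae hlim
    _ ≤ liminf (fun n => ∫⁻ ω, (‖g n ω‖₊ : ℝ≥0∞) ∂P) atTop :=
        lintegral_liminf_le fun n => (hgmeas n).measurable.nnnorm.coe_nnreal_ennreal
    _ ≤ (C₀ : ℝ≥0∞) := by
        refine liminf_le_of_frequently_le (Frequently.of_forall fun n => ?_)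
        have := hC₀ n
        rwa [eLpNorm_one_eq_lintegral_enorm] at this
    _ < ⊤ := ENNReal.coe_lt_top
  have htim : TendstoInMeasure P g atTop V :=
    tendstoInMeasure_of_tendsto_ae (fun n => (hgmeas n).aestronglyMeasurable) hgconv
  have hLp : Tendsto (fun n => eLpNorm (g n - V) 1 P) atTop (𝓝 0) :=
    tendsto_Lp_finite_of_tendstoInMeasure le_rfl ENNReal.one_ne_top
      (fun n => (hgmeas n).aestronglyMeasurable) hMemV hui htim
  have hIg : ∀ n, ∫ ω, g n ω ∂P = ∫ ω, M C ω ∂P := fun n =>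
    haveI := hsf n
    integral_condExp (hle n)
  have hInt : Tendsto (fun n => ∫ ω, g n ω ∂P) atTop (𝓝 (∫ ω, V ω ∂P)) := by
    refine tendsto_integral_of_L1 V (memLp_one_iff_integrable.1 hMemV).aestronglyMeasurable
      (Eventually.of_forall fun n => integrable_condExp) ?_
    have : (fun n => ∫⁻ ω, ‖g n ω - V ω‖ₑ ∂P) = fun n => eLpNorm (g n - V) 1 P := by
      funext n
      rw [eLpNorm_one_eq_lintegral_enorm]
      rfl
    rw [this]
    exact hLp
  have : Tendsto (fun _ : ℕ => ∫ ω, M C ω ∂P) atTop (𝓝 (∫ ω, V ω ∂P)) := by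
    refine hInt.congr fun n => hIg n
  exact ⟨memLp_one_iff_integrable.1 hMemV, tendsto_nhds_unique this tendsto_const_nhds⟩

noncomputable def floorN (n : ℕ) (x : ℝ) : ℝ := (⌊x * 2 ^ n⌋₊ : ℝ) / 2 ^ n

lemma floorN_le {n : ℕ} {x : ℝ} (hx : 0 ≤ x) : floorN n x ≤ x := by
  rw [floorN, div_le_iff₀ (by positivity)]
  exact Nat.floor_le (by positivity)

lemma floorN_gt {n : ℕ} {x : ℝ} (hx : 0 ≤ x) : x - ((2:ℝ) ^ n)⁻¹ < floorN n x := by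
  rw [floorN, sub_lt_iff_lt_add, ← sub_lt_iff_lt_add', div_eq_mul_inv]
  have h1 : x * 2 ^ n < (⌊x * 2 ^ n⌋₊ : ℝ) + 1 := Nat.lt_floor_add_one _
  have h2 : (0:ℝ) < ((2:ℝ) ^ n)⁻¹ := by positivity
  nlinarith [mul_lt_mul_of_pos_right h1 h2, inv_mul_cancel₀ (by positivity : ((2:ℝ)^n) ≠ 0)]

lemma floorN_tendsto {x : ℝ} (hx : 0 ≤ x) :
    Tendsto (fun n => floorN n x) atTop (𝓝 x) := by
  have h1 : Tendsto (fun n : ℕ => x - ((2:ℝ) ^ n)⁻¹) atTop (𝓝 (x - 0)) := by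
    refine tendsto_const_nhds.sub ?_
    have : Tendsto (fun n : ℕ => ((1:ℝ)/2) ^ n) atTop (𝓝 0) :=
      tendsto_pow_atTop_nhds_zero_of_lt_one (by norm_num) (by norm_num)
    refine this.congr fun n => ?_
    rw [one_div, inv_pow]
  rw [sub_zero] at h1
  exact tendsto_of_tendsto_of_tendsto_of_le_of_le h1 tendsto_const_nhds
    (fun n => (floorN_gt hx).le) (fun n => floorN_le hx)

lemma stopping_lt_inter [IsProbabilityMeasure P] {ρ : Ω → ℝ}
    (hρ : IsStoppingTime (cFilt P ℱ) (fun ω => (ρ ω : WithTop ℝ))) (c x : ℝ) :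
    MeasurableSet[cFilt P ℱ c] ({ω | ρ ω ≤ c} ∩ {ω | ρ ω < x}) := by
  have hset : {ω | ρ ω ≤ c} ∩ {ω | ρ ω < x}
      = ⋃ (q : ℚ), ⋃ (_ : (q:ℝ) < x), {ω | ρ ω ≤ min (q:ℝ) c} := by
    ext ω
    simp only [mem_inter_iff, mem_setOf_eq, mem_iUnion, exists_prop, le_min_iff]
    constructor
    · rintro ⟨h1, h2⟩
      obtain ⟨q, hq1, hq2⟩ := exists_rat_btwn h2
      exact ⟨q, hq2, hq1.le, h1⟩
    · rintro ⟨q, hq, h1, h2⟩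
      exact ⟨h2, lt_of_le_of_lt h1 hq⟩
  rw [hset]
  exact MeasurableSet.iUnion fun q => MeasurableSet.iUnion fun _ =>
    (cFilt P ℱ).mono (min_le_right _ c) _ (st_set hρ _)

lemma hatR_measurable [IsProbabilityMeasure P] {M : ℝ → Ω → ℝ}
    (hMad : ∀ t : ℝ, StronglyMeasurable[ℱ t] (M t))
    {G : Set Ω} (hGm : MeasurableSet[m] G) (hGnull : P Gᶜ = 0)
    (hGM : ∀ ω ∈ G, Continuous fun t => M t ω)
    {ρ : Ω → ℝ} (hρ : IsStoppingTime (cFilt P ℱ) (fun ω => (ρ ω : WithTop ℝ))) (hρ0 : ∀ ω, 0 ≤ ρ ω) (c : ℝ) :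
    Measurable[cFilt P ℱ c] (fun ω => if ω ∈ G ∧ ρ ω ≤ c then M (ρ ω) ω else 0) := by
  classical
  have hG' : MeasurableSet[cFilt P ℱ c] G := conull_mem_cFilt hGm hGnull c
  have hD : MeasurableSet[cFilt P ℱ c] {ω | ρ ω ≤ c} := st_set hρ c
  set v : ℕ → Ω → ℝ := fun n ω => if ρ ω ≤ c then M (floorN n (ρ ω)) ω else 0 with hv_def
  have hAk : ∀ n k : ℕ, MeasurableSet[cFilt P ℱ c]
      ({ω | ρ ω ≤ c} ∩ {ω | floorN n (ρ ω) = (k:ℝ) / 2 ^ n}) := by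
    intro n k
    have h2n : (0:ℝ) < 2 ^ n := by positivity
    have hset : {ω | ρ ω ≤ c} ∩ {ω | floorN n (ρ ω) = (k:ℝ) / 2 ^ n}
        = ({ω | ρ ω ≤ c} ∩ {ω | ρ ω < ((k:ℝ)+1) / 2 ^ n}) \
          ({ω | ρ ω ≤ c} ∩ {ω | ρ ω < (k:ℝ) / 2 ^ n}) := by
      ext ω
      simp only [mem_inter_iff, mem_setOf_eq, mem_diff, not_and, not_lt]
      have hfleq : floorN n (ρ ω) = (k:ℝ) / 2 ^ n ↔ ⌊ρ ω * 2 ^ n⌋₊ = k := by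
        rw [floorN]
        constructor
        · intro h
          rw [div_eq_div_iff (ne_of_gt h2n) (ne_of_gt h2n)] at h
          exact_mod_cast mul_right_cancel₀ (ne_of_gt h2n) h
        · intro h; rw [h]
      rw [hfleq, Nat.floor_eq_iff (mul_nonneg (hρ0 ω) (le_of_lt h2n))]
      constructor
      · rintro ⟨h1, hk1, hk2⟩
        refine ⟨⟨h1, ?_⟩, fun _ => ?_⟩
        · rw [lt_div_iff₀ h2n]; exact hk2
        · rw [div_le_iff₀ h2n]; exact hk1
      · rintro ⟨⟨h1, h2⟩, h3⟩
        refine ⟨h1, ?_, ?_⟩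
        · have h4 := h3 h1; rw [div_le_iff₀ h2n] at h4; exact h4
        · rw [lt_div_iff₀ h2n] at h2; exact h2
    rw [hset]
    exact (stopping_lt_inter hρ c _).diff (stopping_lt_inter hρ c _)
  have hv : ∀ n, Measurable[cFilt P ℱ c] (v n) := by
    intro n
    apply measurable_of_Iio
    intro x
    have hset : v n ⁻¹' Iio x =
        (⋃ (k : ℕ), ⋃ (_ : (k:ℝ) / 2 ^ n ≤ c),
          (({ω | ρ ω ≤ c} ∩ {ω | floorN n (ρ ω) = (k:ℝ) / 2 ^ n}) ∩
            {ω | M ((k:ℝ) / 2 ^ n) ω < x})) ∪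
        (⋃ (_ : (0:ℝ) < x), {ω | ρ ω ≤ c}ᶜ) := by
      ext ω
      constructor
      · intro h
        have h' : v n ω < x := h
        by_cases hρc : ρ ω ≤ c
        · left
          rw [hv_def] at h'
          simp only [hρc, if_true] at h'
          refine mem_iUnion.2 ⟨⌊ρ ω * 2 ^ n⌋₊, mem_iUnion.2 ⟨?_, ⟨⟨hρc, rfl⟩, h'⟩⟩⟩
          calc ((⌊ρ ω * 2 ^ n⌋₊ : ℕ):ℝ) / 2 ^ n = floorN n (ρ ω) := rfl
          _ ≤ ρ ω := floorN_le (hρ0 ω)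
          _ ≤ c := hρc
        · right
          rw [hv_def] at h'
          simp only [hρc, if_false] at h'
          exact mem_iUnion.2 ⟨h', hρc⟩
      · intro h
        rcases h with h | h
        · obtain ⟨k, hmem⟩ := mem_iUnion.1 h
          obtain ⟨hk, ⟨⟨hρc, hfl⟩, hM⟩⟩ := mem_iUnion.1 hmem
          show v n ω < x
          rw [hv_def]
          simp only [mem_setOf_eq] at hρc hfl hM
          simp only [hρc, if_true]
          rw [show floorN n (ρ ω) = (k:ℝ)/2^n from hfl]
          exact hM
        · obtain ⟨hx, hρc⟩ := mem_iUnion.1 h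
          show v n ω < x
          rw [hv_def]
          simp only [mem_compl_iff, mem_setOf_eq] at hρc
          simp only [hρc, if_false]
          exact hx
    rw [hset]
    refine MeasurableSet.union ?_ (MeasurableSet.iUnion fun _ => hD.compl)
    refine MeasurableSet.iUnion fun k => MeasurableSet.iUnion fun hk => ?_
    refine (hAk n k).inter ?_
    have h1 : MeasurableSet[ℱ ((k:ℝ)/2^n)] {ω | M ((k:ℝ)/2^n) ω < x} :=
      (hMad _).measurable measurableSet_Iio
    exact le_cFilt _ _ (ℱ.mono hk _ h1)
  have hmeas' : ∀ n, Measurable[cFilt P ℱ c] (fun ω => if ω ∈ G then v n ω else 0) :=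
    fun n => Measurable.ite hG' (hv n) (@measurable_const ℝ Ω _ (cFilt P ℱ c) 0)
  have hlim : ∀ ω, Tendsto (fun n => if ω ∈ G then v n ω else 0) atTop
      (𝓝 (if ω ∈ G ∧ ρ ω ≤ c then M (ρ ω) ω else 0)) := by
    intro ω
    by_cases hG : ω ∈ G
    · by_cases hρc : ρ ω ≤ c
      · simp only [hG, hρc, if_true, and_self, hv_def]
        have h1 : Tendsto (fun n => floorN n (ρ ω)) atTop (𝓝 (ρ ω)) := floorN_tendsto (hρ0 ω)
        exact ((hGM ω hG).tendsto (ρ ω)).comp h1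
      · simp only [hG, hρc, if_true, and_false, if_false, hv_def]
        exact tendsto_const_nhds
    · simp only [hG, if_false, false_and]
      exact tendsto_const_nhds
  exact @measurable_of_tendsto_metrizable Ω ℝ (cFilt P ℱ c) _ _ _ _ _ _ hmeas' (tendsto_pi_nhds.2 hlim)

lemma core [IsProbabilityMeasure P] {M : ℝ → Ω → ℝ} (hM : Martingale M ℱ P)
    {G : Set Ω} (hGm : MeasurableSet[m] G) (hGnull : P Gᶜ = 0)
    (hGM : ∀ ω ∈ G, Continuous fun t => M t ω)
    {ρ : Ω → ℝ} (hρ : IsStoppingTime (cFilt P ℱ) (fun ω => (ρ ω : WithTop ℝ)))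
    {K : ℝ} (hρ0 : ∀ ω, 0 ≤ ρ ω) (hρK : ∀ ω, ρ ω ≤ K)
    {ε δ : ℝ} (hε : 0 < ε) (hδ : 0 < δ) :
    P {ω | ω ∈ G ∧ ∀ t ∈ Icc (0:ℝ) δ, ε * t ≤ M (ρ ω + t) ω - M (ρ ω) ω} = 0 := by
  set Ev := {ω | ω ∈ G ∧ ∀ t ∈ Icc (0:ℝ) δ, ε * t ≤ M (ρ ω + t) ω - M (ρ ω) ω} with hEv
  suffices key : ∀ η : ℝ, 0 < η → P Ev ≤ ENNReal.ofReal (η / (ε * δ)) by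
    refine le_antisymm ?_ zero_le
    have h1 : ∀ n : ℕ, P Ev ≤ ENNReal.ofReal ((1/((n:ℝ)+1)) / (ε * δ)) := fun n =>
      key _ (by positivity)
    have h2 : Tendsto (fun n : ℕ => ENNReal.ofReal ((1/((n:ℝ)+1)) / (ε * δ))) atTop (𝓝 0) := by
      rw [show (0:ℝ≥0∞) = ENNReal.ofReal 0 by simp]
      apply ENNReal.tendsto_ofReal
      have h3 := tendsto_one_div_add_atTop_nhds_zero_nat.div_const (ε*δ)
      simpa using h3
    exact ge_of_tendsto h2 (Eventually.of_forall h1)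
  intro η hη
  have hMc := martingale_cFilt hM
  have hMad : ∀ t : ℝ, StronglyMeasurable[ℱ t] (M t) := hM.stronglyAdapted
  have hMm : ∀ t : ℝ, Measurable (M t) := fun t => ((hMad t).mono (ℱ.le t)).measurable
  have hρm : Measurable ρ := by
    apply measurable_of_Iic
    intro c
    exact (cFilt P ℱ).le c _ (st_set hρ c)
  have haeG : ∀ᵐ ω ∂P, ω ∈ G := mem_ae_iff.2 hGnull
  set R : Ω → ℝ := fun ω => if ω ∈ G then M (ρ ω) ω else 0 with hR
  set T : Ω → ℝ := fun ω => if ω ∈ G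
      then hitT (fun t => M t ω - R ω) (ρ ω) (ρ ω + δ) (-η) else ρ ω + δ with hT
  set V : Ω → ℝ := fun ω => if ω ∈ G then M (T ω) ω else 0 with hV
  have hab : ∀ ω, ρ ω ≤ ρ ω + δ := fun ω => by linarith
  have hRval : ∀ ω ∈ G, R ω = M (ρ ω) ω := fun ω hω => by rw [hR]; simp [hω]
  have hcontf : ∀ ω ∈ G, Continuous (fun t => M t ω - R ω) := fun ω hω =>
    (hGM ω hω).sub continuous_const
  have hT1 : ∀ ω, ρ ω ≤ T ω := by
    intro ω; rw [hT]; by_cases hω : ω ∈ G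
    · simp only [hω, if_true]; exact hit_ge (hab ω)
    · simp only [hω, if_false]; exact hab ω
  have hT2 : ∀ ω, T ω ≤ ρ ω + δ := by
    intro ω; rw [hT]; by_cases hω : ω ∈ G
    · simp only [hω, if_true]; exact hit_le (hab ω)
    · simp only [hω, if_false]; exact le_rfl
  have hT0 : ∀ ω, 0 ≤ T ω := fun ω => (hρ0 ω).trans (hT1 ω)
  -- `T` is a stopping time for the augmented filtration
  have hTst : IsStoppingTime (cFilt P ℱ) (fun ω => (T ω : WithTop ℝ)) := by
    refine st_of_real fun c => ?_
    set hath : Ω → ℝ := fun ω => if ω ∈ G ∧ ρ ω ≤ c then M (ρ ω) ω else 0 with hhat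
    have hhatm : Measurable[cFilt P ℱ c] hath := hatR_measurable hMad hGm hGnull hGM hρ hρ0 c
    have hhatval : ∀ ω ∈ G, ρ ω ≤ c → hath ω = R ω := by
      intro ω hω hρc
      rw [hhat, hR]; simp [hω, hρc]
    have hδset : MeasurableSet[cFilt P ℱ c] {ω | ρ ω + δ ≤ c} := by
      have hseteq : {ω | ρ ω + δ ≤ c} = {ω | ρ ω ≤ c - δ} := by
        ext ω; simp only [mem_setOf_eq]; constructor <;> intro h <;> linarith
      rw [hseteq]
      exact (cFilt P ℱ).mono (by linarith : c - δ ≤ c) _ (st_set hρ (c - δ))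
    set Φ : Set Ω := {ω | ρ ω + δ ≤ c} ∪ ({ω | ρ ω ≤ c} ∩
        ({ω | M c ω - hath ω ≤ -η} ∪
          ⋂ (n : ℕ), ⋃ (q : ℚ), ⋃ (_ : (q:ℝ) < c),
            ({ω | ρ ω ≤ (q:ℝ)} ∩ {ω | M q ω - hath ω < -η + 1/((n:ℝ)+1)}))) with hΦ
    have hΦm : MeasurableSet[cFilt P ℱ c] Φ := by
      refine hδset.union ((st_set hρ c).inter (MeasurableSet.union ?_ ?_))
      · have hseteq : {ω | M c ω - hath ω ≤ -η}
            = (fun ω => M c ω - hath ω) ⁻¹' (Iic (-η)) := rfl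
        rw [hseteq]
        exact (((hMad c).mono (le_cFilt c)).measurable.sub hhatm) measurableSet_Iic
      · refine MeasurableSet.iInter fun n => MeasurableSet.iUnion fun q =>
          MeasurableSet.iUnion fun hq => MeasurableSet.inter ?_ ?_
        · exact (cFilt P ℱ).mono hq.le _ (st_set hρ (q:ℝ))
        · have hseteq : {ω | M q ω - hath ω < -η + 1/((n:ℝ)+1)}
              = (fun ω => M (q:ℝ) ω - hath ω) ⁻¹' (Iio (-η + 1/((n:ℝ)+1))) := rfl
          rw [hseteq]
          refine (((hMad (q:ℝ)).mono ?_).measurable.sub hhatm) measurableSet_Iio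
          exact le_trans (ℱ.mono hq.le) (le_cFilt c)
    have hseteq : {ω | T ω ≤ c} = (Gᶜ ∩ {ω | ρ ω + δ ≤ c}) ∪ (G ∩ Φ) := by
      ext ω
      by_cases hω : ω ∈ G
      · simp only [mem_setOf_eq, mem_union, mem_inter_iff, mem_compl_iff, hω,
          not_true_eq_false, false_and, false_or, true_and]
        rw [hT]; simp only [hω, if_true]
        rw [hit_le_iff (hcontf ω hω) (hab ω)]
        rw [hΦ]
        simp only [mem_union, mem_inter_iff, mem_setOf_eq, mem_iInter, mem_iUnion, exists_prop]
        constructor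
        · rintro (h | ⟨hac, h⟩)
          · exact Or.inl h
          · refine Or.inr ⟨hac, ?_⟩
            rcases h with h | h
            · exact Or.inl (by rw [hhatval ω hω hac]; exact h)
            · refine Or.inr fun n => ?_
              obtain ⟨q, hq1, hq2, hq3⟩ := h n
              refine ⟨q, hq2, hq1, ?_⟩
              rw [hhatval ω hω hac]
              exact hq3
        · rintro (h | ⟨hac, h⟩)
          · exact Or.inl h
          · refine Or.inr ⟨hac, ?_⟩
            rcases h with h | h
            · exact Or.inl (by rw [← hhatval ω hω hac]; exact h)
            · refine Or.inr fun n => ?_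
              obtain ⟨q, hq2, hq1, hq3⟩ := h n
              refine ⟨q, hq1, hq2, ?_⟩
              rw [← hhatval ω hω hac]
              exact hq3
      · simp only [mem_setOf_eq, mem_union, mem_inter_iff, mem_compl_iff, hω,
          not_false_eq_true, true_and, false_and, or_false]
        rw [hT]; simp only [hω, if_false]
    rw [hseteq]
    refine MeasurableSet.union ?_ ((conull_mem_cFilt hGm hGnull c).inter hΦm)
    refine null_mem_cFilt (hGm.compl.inter ?_) ?_ c
    · exact measurableSet_le (hρm.add_const δ) measurable_const
    · exact measure_mono_null inter_subset_left hGnull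
  have hTm : Measurable T := by
    apply measurable_of_Iic
    intro c
    exact (cFilt P ℱ).le c _ (st_set hTst c)
  -- dyadic approximations and the limit identity
  set C : ℝ := K + δ + 1 with hCdef
  have hρnle : ∀ n ω, ceilN n (ρ ω) ≤ C := by
    intro n ω
    have := ceilN_le_add_one (n := n) (hρ0 ω)
    have := hρK ω
    rw [hCdef]; linarith
  have hTnle : ∀ n ω, ceilN n (T ω) ≤ C := by
    intro n ω
    have h1 := ceilN_le_add_one (n := n) (hT0 ω)
    have h2 := hT2 ω
    have h3 := hρK ω
    rw [hCdef]; linarith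
  have hcnt : ∀ (τ : Ω → ℝ) (n : ℕ), (Set.range fun ω => ceilN n (τ ω)).Countable := by
    intro τ n
    refine Set.Countable.mono ?_ (ceilN_range_countable (n := n))
    rintro x ⟨ω, rfl⟩
    exact ⟨τ ω, rfl⟩
  have hconv : ∀ (τ : Ω → ℝ), (∀ ω, 0 ≤ τ ω) →
      ∀ ω ∈ G, Tendsto (fun n => stoppedValue M (fun ω' => (ceilN n (τ ω') : WithTop ℝ)) ω) atTop
        (𝓝 (M (τ ω) ω)) := by
    intro τ hτ0 ω hω
    exact ((hGM ω hω).tendsto (τ ω)).comp (ceilN_tendsto (hτ0 ω))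
  have hmeas_approx : ∀ (τ : Ω → ℝ), Measurable τ → ∀ n : ℕ,
      Measurable fun ω => if ω ∈ G then stoppedValue M (fun ω' => (ceilN n (τ ω') : WithTop ℝ)) ω else 0 := by
    intro τ hτm n
    exact Measurable.ite hGm
      (measurable_sv (ceilN_measurable.comp hτm) (hcnt τ n) hMm) measurable_const
  have hRmeas : Measurable R := by
    refine measurable_of_tendsto_metrizable (hmeas_approx ρ hρm) (tendsto_pi_nhds.2 ?_)
    intro ω
    by_cases hω : ω ∈ G
    · simp only [hω, if_true, hR]
      exact hconv ρ hρ0 ω hω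
    · simp only [hω, if_false, hR]
      exact tendsto_const_nhds
  have hVmeas : Measurable V := by
    refine measurable_of_tendsto_metrizable (hmeas_approx T hTm) (tendsto_pi_nhds.2 ?_)
    intro ω
    by_cases hω : ω ∈ G
    · simp only [hω, if_true, hV]
      exact hconv T hT0 ω hω
    · simp only [hω, if_false, hV]
      exact tendsto_const_nhds
  obtain ⟨hRint, hRI⟩ := integral_limit_sv hMc (C := C) (τ := fun n ω => ceilN n (ρ ω))
    (fun n => ceilN_isStoppingTime hρ hρ0 n) (fun n => hcnt ρ n) (fun n ω => hρnle n ω)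
    hRmeas (by
      filter_upwards [haeG] with ω hω
      rw [hRval ω hω]
      exact hconv ρ hρ0 ω hω)
  obtain ⟨hVint, hVI⟩ := integral_limit_sv hMc (C := C) (τ := fun n ω => ceilN n (T ω))
    (fun n => ceilN_isStoppingTime hTst hT0 n) (fun n => hcnt T n) (fun n ω => hTnle n ω)
    hVmeas (by
      filter_upwards [haeG] with ω hω
      have hVv : V ω = M (T ω) ω := by rw [hV]; simp [hω]
      rw [hVv]
      exact hconv T hT0 ω hω)
  -- pathwise bounds
  have hlow : ∀ ω ∈ G, -η ≤ V ω - R ω := by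
    intro ω hω
    have hfa : -η < M (ρ ω) ω - R ω := by
      rw [hRval ω hω]; simp [hη]
    have h1 := theta_le_hit_val (hcontf ω hω) (hab ω) hfa
    have hVv : V ω = M (T ω) ω := by rw [hV]; simp [hω]
    have hTv : T ω = hitT (fun t => M t ω - R ω) (ρ ω) (ρ ω + δ) (-η) := by
      rw [hT]; simp [hω]
    rw [hVv, hTv]
    exact h1
  have hev : ∀ ω ∈ Ev, ε * δ ≤ V ω - R ω := by
    intro ω hωEv
    obtain ⟨hω, hall⟩ := hωEv
    have hTv : T ω = ρ ω + δ := by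
      rw [hT]; simp only [hω, if_true]
      apply hit_eq_of_gt (hab ω)
      intro t hat htb
      have h1 := hall (t - ρ ω) ⟨by linarith, by linarith⟩
      rw [add_sub_cancel] at h1
      have h2 : 0 ≤ ε * (t - ρ ω) := mul_nonneg hε.le (by linarith)
      rw [hRval ω hω]
      linarith
    have hVv : V ω = M (T ω) ω := by rw [hV]; simp [hω]
    have h1 := hall δ ⟨hδ.le, le_rfl⟩
    rw [hVv, hTv, hRval ω hω]
    linarith
  -- Markov inequality
  set F : Ω → ℝ := fun ω => V ω - R ω + η with hF
  have hFint : Integrable F P := (hVint.sub hRint).add (integrable_const η)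
  have hFnn : 0 ≤ᵐ[P] F := by
    filter_upwards [haeG] with ω hω
    have := hlow ω hω
    simp only [hF, Pi.zero_apply]
    linarith
  have hFI : ∫ ω, F ω ∂P = η := by
    have h1 : ∫ ω, (V ω - R ω) ∂P = 0 := by
      rw [integral_sub hVint hRint, hRI, hVI]; ring
    calc ∫ ω, F ω ∂P = ∫ ω, ((V ω - R ω) + η) ∂P := rfl
    _ = (∫ ω, (V ω - R ω) ∂P) + ∫ _, η ∂P :=
        integral_add (hVint.sub hRint) (integrable_const η)
    _ = η := by rw [h1, integral_const]; simp
  have hmarkov := mul_meas_ge_le_integral_of_nonneg hFnn hFint (ε * δ)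
  rw [hFI] at hmarkov
  have hsub : Ev ⊆ {ω | ε * δ ≤ F ω} := by
    intro ω hωEv
    have h1 := hev ω hωEv
    simp only [mem_setOf_eq, hF]
    linarith
  calc P Ev ≤ P {ω | ε * δ ≤ F ω} := measure_mono hsub
  _ ≤ ENNReal.ofReal (η / (ε * δ)) := by
      rw [ENNReal.le_ofReal_iff_toReal_le (measure_ne_top P _) (by positivity)]
      rw [le_div_iff₀ (by positivity)]
      rw [mul_comm]; exact hmarkov

end Stmt3Aux
end Stmt3AuxSec

open Stmt3Aux Topology
open scoped ENNReal NNReal Classical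

/-- for λ < 0 and a weak solution `Y`, with `σ = inf{t ≥ 0 : Y(t) ≤ 0}`,
`M(t) = ∫₀ᵗ 1_{Y(s)>0} dB(s)` and `A_δ = {s ∈ [σ, σ+δ] : Y(s) > 0}`, the event
`E_δ = {M(σ+t) - M(σ) ≥ -λt for all t ∈ [0,δ]}` satisfies
`P(E_δ ∩ {Leb(A_δ) > 0}) = 0`. -/
theorem stmt3 {Ω : Type*} [m : MeasurableSpace Ω] (P : Measure Ω) [IsProbabilityMeasure P]
    (ℱ : Filtration ℝ m) (lam : ℝ) (hlam : lam < 0)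
    (B : ℝ → Ω → ℝ) (ξ : Ω → ℝ) (Y : ℝ → Ω → ℝ) (M : ℝ → Ω → ℝ)
    (hsol : WeakSolution P ℱ lam B ξ Y M)
    (σ : Ω → ℝ) (hσ : ∀ ω, σ ω = sInf {t : ℝ | 0 ≤ t ∧ Y t ω ≤ 0})
    (δ : ℝ) (hδ : 0 < δ) :
    P ({ω | ∀ t ∈ Icc (0:ℝ) δ, -lam * t ≤ M (σ ω + t) ω - M (σ ω) ω} ∩
        {ω | 0 < volume {s : ℝ | s ∈ Icc (σ ω) (σ ω + δ) ∧ 0 < Y s ω}}) = 0 := by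
  classical
  have hε : 0 < -lam := by linarith
  have hM : Martingale M ℱ P := hsol.integral.mart
  -- a measurable co-null set of "good" sample points
  have hae : ∀ᵐ ω ∂P, (Continuous fun t => Y t ω) ∧ (Continuous fun t => M t ω) :=
    hsol.contY.and hsol.integral.cont
  obtain ⟨N, hNsub, hNm, hN0⟩ := exists_measurable_superset_of_null (ae_iff.1 hae)
  set G := Nᶜ with hGdef
  have hGm : MeasurableSet G := hNm.compl
  have hGnull : P Gᶜ = 0 := by rw [hGdef, compl_compl]; exact hN0
  have hGY : ∀ ω ∈ G, Continuous fun t => Y t ω := by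
    intro ω hω
    by_contra h
    exact hω (hNsub (by simp only [mem_setOf_eq]; tauto))
  have hGM : ∀ ω ∈ G, Continuous fun t => M t ω := by
    intro ω hω
    by_contra h
    exact hω (hNsub (by simp only [mem_setOf_eq]; tauto))
  -- the capped hitting times of `{Y ≤ 0}`, one for each integer bound `K`
  set ρ : ℕ → Ω → ℝ := fun K ω => if ω ∈ G then hitT (fun t => Y t ω) 0 (K:ℝ) 0 else 0
    with hρdef
  have hK0 : ∀ K : ℕ, (0:ℝ) ≤ (K:ℝ) := fun K => Nat.cast_nonneg K
  have hρ0 : ∀ K ω, 0 ≤ ρ K ω := by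
    intro K ω
    rw [hρdef]
    by_cases hω : ω ∈ G
    · simp only [hω, if_true]; exact hit_ge (hK0 K)
    · simp only [hω, if_false]; exact le_rfl
  have hρK : ∀ K ω, ρ K ω ≤ (K:ℝ) := by
    intro K ω
    rw [hρdef]
    by_cases hω : ω ∈ G
    · simp only [hω, if_true]; exact hit_le (hK0 K)
    · simp only [hω, if_false]; exact hK0 K
  have hρst : ∀ K : ℕ, IsStoppingTime (cFilt P ℱ) (fun ω => (ρ K ω : WithTop ℝ)) := by
    intro K
    refine st_of_real fun c => ?_
    set Ψ : Set Ω := {ω | (K:ℝ) ≤ c} ∪ ({ω | (0:ℝ) ≤ c} ∩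
        ({ω | Y c ω ≤ 0} ∪ ⋂ (n : ℕ), ⋃ (q : ℚ), ⋃ (_ : (0:ℝ) ≤ (q:ℝ) ∧ (q:ℝ) < c),
          {ω | Y (q:ℝ) ω < 0 + 1/((n:ℝ)+1)})) with hΨ
    have hΨm : MeasurableSet[cFilt P ℱ c] Ψ := by
      refine MeasurableSet.union ?_ (MeasurableSet.inter ?_ (MeasurableSet.union ?_ ?_))
      · by_cases hc : (K:ℝ) ≤ c
        · have : {ω : Ω | (K:ℝ) ≤ c} = univ := by ext ω; simp [hc]
          rw [this]; exact MeasurableSet.univ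
        · have : {ω : Ω | (K:ℝ) ≤ c} = ∅ := by ext ω; simp [hc]
          rw [this]; exact @MeasurableSet.empty Ω (cFilt P ℱ c)
      · by_cases hc : (0:ℝ) ≤ c
        · have : {ω : Ω | (0:ℝ) ≤ c} = univ := by ext ω; simp [hc]
          rw [this]; exact MeasurableSet.univ
        · have : {ω : Ω | (0:ℝ) ≤ c} = ∅ := by ext ω; simp [hc]
          rw [this]; exact @MeasurableSet.empty Ω (cFilt P ℱ c)
      · have hseteq : {ω | Y c ω ≤ 0} = Y c ⁻¹' (Iic 0) := rfl
        rw [hseteq]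
        exact le_cFilt c _ ((hsol.adaptedY c) measurableSet_Iic)
      · refine MeasurableSet.iInter fun n => MeasurableSet.iUnion fun q =>
          MeasurableSet.iUnion fun hq => ?_
        have hseteq : {ω | Y (q:ℝ) ω < 0 + 1/((n:ℝ)+1)}
            = Y (q:ℝ) ⁻¹' (Iio (0 + 1/((n:ℝ)+1))) := rfl
        rw [hseteq]
        refine le_trans (ℱ.mono hq.2.le) (le_cFilt c) _
          ((hsol.adaptedY (q:ℝ)) measurableSet_Iio)
    have hseteq : {ω | ρ K ω ≤ c} = (Gᶜ ∩ {ω | (0:ℝ) ≤ c}) ∪ (G ∩ Ψ) := by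
      ext ω
      by_cases hω : ω ∈ G
      · simp only [mem_setOf_eq, mem_union, mem_inter_iff, mem_compl_iff, hω,
          not_true_eq_false, false_and, false_or, true_and]
        rw [hρdef]; simp only [hω, if_true]
        rw [hit_le_iff (hGY ω hω) (hK0 K), hΨ]
        simp only [mem_union, mem_inter_iff, mem_setOf_eq, mem_iInter, mem_iUnion, exists_prop]
        constructor
        · rintro (h | ⟨hc, h | h⟩)
          · exact Or.inl h
          · exact Or.inr ⟨hc, Or.inl h⟩
          · refine Or.inr ⟨hc, Or.inr fun n => ?_⟩
            obtain ⟨q, hq1, hq2, hq3⟩ := h n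
            exact ⟨q, ⟨hq1, hq2⟩, hq3⟩
        · rintro (h | ⟨hc, h | h⟩)
          · exact Or.inl h
          · exact Or.inr ⟨hc, Or.inl h⟩
          · refine Or.inr ⟨hc, Or.inr fun n => ?_⟩
            obtain ⟨q, ⟨hq1, hq2⟩, hq3⟩ := h n
            exact ⟨q, hq1, hq2, hq3⟩
      · simp only [mem_setOf_eq, mem_union, mem_inter_iff, mem_compl_iff, hω,
          not_false_eq_true, true_and, false_and, or_false]
        rw [hρdef]; simp only [hω, if_false]
    rw [hseteq]
    refine MeasurableSet.union ?_ ((conull_mem_cFilt hGm hGnull c).inter hΨm)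
    by_cases hc : (0:ℝ) ≤ c
    · have : Gᶜ ∩ {ω : Ω | (0:ℝ) ≤ c} = Gᶜ := by ext ω; simp [hc]
      rw [this]
      exact null_mem_cFilt hGm.compl hGnull c
    · have : Gᶜ ∩ {ω : Ω | (0:ℝ) ≤ c} = ∅ := by ext ω; simp [hc]
      rw [this]
      exact @MeasurableSet.empty Ω (cFilt P ℱ c)
  -- the "bad" events from the core lemma
  have hcoreK : ∀ K : ℕ, P {ω | ω ∈ G ∧ ∀ t ∈ Icc (0:ℝ) δ,
      (-lam) * t ≤ M (ρ K ω + t) ω - M (ρ K ω) ω} = 0 := fun K =>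
    core hM hGm hGnull hGM (hρst K) (hρ0 K) (hρK K) hε hδ
  have hcore0 : P {ω | ω ∈ G ∧ ∀ t ∈ Icc (0:ℝ) δ,
      (-lam) * t ≤ M ((fun _ : Ω => (0:ℝ)) ω + t) ω - M ((fun _ : Ω => (0:ℝ)) ω) ω} = 0 := by
    refine core hM hGm hGnull hGM ?_ (K := 0) (fun ω => le_rfl) (fun ω => by norm_num) hε hδ
    exact isStoppingTime_const (cFilt P ℱ) 0
  -- inclusion of the target event
  have hbig : P (Gᶜ ∪ ({ω | ω ∈ G ∧ ∀ t ∈ Icc (0:ℝ) δ,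
      (-lam) * t ≤ M ((fun _ : Ω => (0:ℝ)) ω + t) ω - M ((fun _ : Ω => (0:ℝ)) ω) ω} ∪
      ⋃ K : ℕ, {ω | ω ∈ G ∧ ∀ t ∈ Icc (0:ℝ) δ,
        (-lam) * t ≤ M (ρ K ω + t) ω - M (ρ K ω) ω})) = 0 := by
    refine measure_union_null hGnull (measure_union_null hcore0 ?_)
    exact measure_iUnion_null fun K => hcoreK K
  refine measure_mono_null ?_ hbig
  · rintro ω ⟨hE, -⟩
    simp only [mem_setOf_eq] at hE
    by_cases hω : ω ∈ G
    swap
    · exact Or.inl hω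
    right
    by_cases hS : {t : ℝ | 0 ≤ t ∧ Y t ω ≤ 0} = ∅
    · left
      have hσ0 : σ ω = 0 := by rw [hσ, hS, Real.sInf_empty]
      refine ⟨hω, fun t ht => ?_⟩
      have := hE t ht
      rwa [hσ0] at this
    · right
      have hSne : Set.Nonempty {t : ℝ | 0 ≤ t ∧ Y t ω ≤ 0} := nonempty_iff_ne_empty.2 hS
      have hσnn : 0 ≤ σ ω := by
        rw [hσ]
        exact Real.sInf_nonneg fun x hx => hx.1
      set K : ℕ := ⌈σ ω⌉₊ with hKdef
      have hσK : σ ω ≤ (K:ℝ) := Nat.le_ceil _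
      have hρσ : ρ K ω = σ ω := by
        rw [hρdef]; simp only [hω, if_true]
        rw [hitT]
        have hbb : BddBelow {t : ℝ | 0 ≤ t ∧ Y t ω ≤ 0} := ⟨0, fun x hx => hx.1⟩
        rw [csInf_union (bddBelow_singleton) (singleton_nonempty _) hbb hSne]
        rw [csInf_singleton, hσ]
        exact min_eq_right (by rw [← hσ]; exact hσK)
      refine mem_iUnion.2 ⟨K, hω, fun t ht => ?_⟩
      rw [hρσ]
      exact hE t ht
end

section
/- Let λ > 0 and suppose (X, B) is a weak solution of dX(t) = λ·1_{X(t)≤0} dt + 1_{X(t)>0} dB(t) with X(0) ≥ 0 almost surely. Then almost surely X(t) ≥ 0 for all t ≥ 0. -/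
open MeasureTheory ProbabilityTheory Set Filter

/-- for λ > 0, any weak solution of
`dX = λ 1_{X ≤ 0} dt + 1_{X > 0} dB` with `X(0) ≥ 0` a.s. stays nonnegative:
a.s. `X(t) ≥ 0` for all `t ≥ 0`. -/
theorem stmt7 {Ω : Type*} [m : MeasurableSpace Ω] (P : Measure Ω) [IsProbabilityMeasure P]
    (ℱ : Filtration ℝ m) (lam : ℝ) (hlam : 0 < lam)
    (B X M : ℝ → Ω → ℝ) (hB : IsStdBrownian P ℱ B)
    (hcont : ∀ᵐ ω ∂P, Continuous fun t => X t ω) (hadapted : Adapted ℱ X)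
    (hM : IsIndIntegral P ℱ B X M)
    (heqn : ∀ᵐ ω ∂P, ∀ t : ℝ, 0 ≤ t →
      X t ω = X 0 ω + lam * (volume {s : ℝ | s ∈ Icc 0 t ∧ X s ω ≤ 0}).toReal + M t ω)
    (hinit : ∀ᵐ ω ∂P, 0 ≤ X 0 ω) :
    ∀ᵐ ω ∂P, ∀ t : ℝ, 0 ≤ t → 0 ≤ X t ω := by
  filter_upwards [hcont, hM.flat, heqn, hinit] with ω hc hflat heq h0
  intro t ht
  by_contra hneg
  push_neg at hneg
  -- the set of times in [0,t] where X is nonnegative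
  set S : Set ℝ := {s : ℝ | s ∈ Icc 0 t ∧ 0 ≤ X s ω} with hSdef
  have hS0 : (0:ℝ) ∈ S := ⟨⟨le_refl 0, ht⟩, h0⟩
  have hSbdd : BddAbove S := ⟨t, fun s hs => hs.1.2⟩
  have hSclosed : IsClosed S := by
    have : S = Icc 0 t ∩ {s : ℝ | 0 ≤ X s ω} := rfl
    rw [this]
    exact isClosed_Icc.inter (isClosed_le continuous_const hc)
  obtain ⟨s₀, hs₀mem, hs₀max⟩ : ∃ s₀ ∈ S, ∀ u ∈ S, u ≤ s₀ :=
    ⟨sSup S, hSclosed.csSup_mem ⟨0, hS0⟩ hSbdd, fun u hu => le_csSup hSbdd hu⟩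
  have hs₀0 : 0 ≤ s₀ := hs₀mem.1.1
  have hs₀t : s₀ ≤ t := hs₀mem.1.2
  have hs₀nonneg : 0 ≤ X s₀ ω := hs₀mem.2
  have hlt : ∀ u : ℝ, s₀ < u → u ≤ t → X u ω < 0 := by
    intro u hu hut
    by_contra h
    push_neg at h
    exact absurd (hs₀max u ⟨⟨le_trans hs₀0 hu.le, hut⟩, h⟩) (not_le.2 hu)
  have hs₀lt : s₀ < t := lt_of_le_of_ne hs₀t (by rintro rfl; exact absurd hs₀nonneg (not_le.2 hneg))
  -- X s₀ ω = 0
  have hs₀zero : X s₀ ω = 0 := by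
    rcases eq_or_lt_of_le hs₀nonneg with h | h
    · exact h.symm
    · exfalso
      have hcont' : ContinuousAt (fun s => X s ω) s₀ := hc.continuousAt
      have hev : ∀ᶠ u in nhds s₀, 0 < X u ω := hcont' (Ioi_mem_nhds h)
      have hev2 : ∀ᶠ u in nhds s₀, u < t := Iio_mem_nhds hs₀lt
      have h1 : ∀ᶠ u in nhdsWithin s₀ (Ioi s₀), (0 < X u ω ∧ u < t) ∧ u ∈ Ioi s₀ :=
        ((hev.and hev2).filter_mono nhdsWithin_le_nhds).and self_mem_nhdsWithin
      obtain ⟨u, ⟨hu1, hu2⟩, hu3⟩ := h1.exists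
      exact absurd hu1 (not_lt.2 (hlt u hu3 hu2.le).le)
  -- X ≤ 0 on [s₀, t]
  have hle : ∀ u ∈ Icc s₀ t, X u ω ≤ 0 := by
    intro u ⟨hu1, hu2⟩
    rcases eq_or_lt_of_le hu1 with rfl | h
    · exact hs₀zero.le
    · exact (hlt u h hu2).le
  -- M is flat on [s₀, t]
  have hMflat : M t ω = M s₀ ω := hflat s₀ t hs₀0 hs₀t hle
  -- measure computation
  set A : ℝ → Set ℝ := fun r => {s : ℝ | s ∈ Icc 0 r ∧ X s ω ≤ 0} with hAdef
  have hAeq : A t = A s₀ ∪ Ioc s₀ t := by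
    ext s
    constructor
    · rintro ⟨⟨h1, h2⟩, h3⟩
      rcases le_or_gt s s₀ with h | h
      · exact Or.inl ⟨⟨h1, h⟩, h3⟩
      · exact Or.inr ⟨h, h2⟩
    · rintro (⟨⟨h1, h2⟩, h3⟩ | ⟨h1, h2⟩)
      · exact ⟨⟨h1, h2.trans hs₀t⟩, h3⟩
      · exact ⟨⟨hs₀0.trans h1.le, h2⟩, hle s ⟨h1.le, h2⟩⟩
  have hdisj : Disjoint (A s₀) (Ioc s₀ t) := by
    rw [Set.disjoint_left]
    rintro s ⟨⟨_, h2⟩, _⟩ ⟨h3, _⟩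
    exact absurd h2 (not_le.2 h3)
  have hAfin : volume (A s₀) ≠ ⊤ := by
    have hsub : A s₀ ⊆ Icc 0 s₀ := fun s hs => hs.1
    exact ((measure_mono hsub).trans_lt measure_Icc_lt_top).ne
  have hvol : (volume (A t)).toReal = (volume (A s₀)).toReal + (t - s₀) := by
    rw [hAeq, measure_union hdisj measurableSet_Ioc, Real.volume_Ioc,
      ENNReal.toReal_add hAfin ENNReal.ofReal_ne_top,
      ENNReal.toReal_ofReal (sub_nonneg.2 hs₀t)]
  -- equation at t and s₀
  have heqt : X t ω = X 0 ω + lam * (volume (A t)).toReal + M t ω := heq t ht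
  have heqs : X s₀ ω = X 0 ω + lam * (volume (A s₀)).toReal + M s₀ ω := heq s₀ hs₀0
  have : X t ω = X s₀ ω + lam * (t - s₀) := by
    rw [heqt, heqs, hvol, hMflat]; ring
  have hpos : 0 ≤ lam * (t - s₀) := mul_nonneg hlam.le (sub_nonneg.2 hs₀t)
  rw [hs₀zero] at this
  linarith
end

section
/- Skorokhod map (deterministic lemma): for a continuous function w : [0, ∞) → ℝ with w(0) ≥ 0, the pair z(t) := w(t) + ℓ(t), ℓ(t) := max(0, max_{0≤s≤t} (−w(s))), is the unique pair such that z is continuous and nonnegative, ℓ is continuous, nondecreasing with ℓ(0) = 0, ℓ increases only at times t with z(t) = 0, and z = w + ℓ. -/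
open Set Filter Topology

section SkorokhodAux

variable {w : ℝ → ℝ}

/-- The reflection functional. -/
noncomputable def skLfun (w : ℝ → ℝ) (t : ℝ) : ℝ :=
  max 0 (sSup ((fun s => -w s) '' Icc 0 t))

lemma sk_bdd (hw : Continuous w) (a t : ℝ) :
    BddAbove ((fun s => -w s) '' Icc a t) :=
  (isCompact_Icc.image hw.neg).bddAbove

lemma sk_ne {a t : ℝ} (h : a ≤ t) : ((fun s : ℝ => -w s) '' Icc a t).Nonempty :=
  (nonempty_Icc.mpr h).image _

lemma sk_nonneg (w : ℝ → ℝ) (t : ℝ) : 0 ≤ skLfun w t := le_max_left _ _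

lemma sk_neg_le (hw : Continuous w) {t : ℝ} (ht : 0 ≤ t) : -w t ≤ skLfun w t :=
  le_trans (le_csSup (sk_bdd hw 0 t) ⟨t, ⟨ht, le_refl t⟩, rfl⟩) (le_max_right _ _)

lemma sk_mono (hw : Continuous w) : MonotoneOn (skLfun w) (Ici 0) := by
  intro s hs t _ hst
  refine max_le_max le_rfl (csSup_le_csSup (sk_bdd hw 0 t) (sk_ne hs) ?_)
  exact image_mono (Icc_subset_Icc le_rfl hst)

lemma sk_split (hw : Continuous w) {s t : ℝ} (hs : 0 ≤ s) (hst : s ≤ t) :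
    skLfun w t = max (skLfun w s) (sSup ((fun u => -w u) '' Icc s t)) := by
  unfold skLfun
  rw [← Icc_union_Icc_eq_Icc hs hst, image_union,
    csSup_union (sk_bdd hw 0 s) (sk_ne hs) (sk_bdd hw s t) (sk_ne hst), max_assoc]

lemma sk_zero (hw0 : 0 ≤ w 0) : skLfun w 0 = 0 := by
  unfold skLfun
  rw [Icc_self, image_singleton, csSup_singleton]
  exact max_eq_left (neg_nonpos.mpr hw0)

lemma sk_flat (hw : Continuous w) {s t : ℝ} (hs : 0 ≤ s) (hst : s ≤ t)
    (hpos : ∀ u ∈ Icc s t, 0 < w u + skLfun w u) : skLfun w t = skLfun w s := by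
  rcases le_total (sSup ((fun u : ℝ => -w u) '' Icc s t)) (skLfun w s) with h | h
  · rw [sk_split hw hs hst, max_eq_left h]
  · exfalso
    have hmem : sSup ((fun u : ℝ => -w u) '' Icc s t) ∈ (fun u : ℝ => -w u) '' Icc s t :=
      (isCompact_Icc.image hw.neg).sSup_mem (sk_ne hst)
    obtain ⟨y, hy, hyeq⟩ := hmem
    have h1 : 0 < w y + skLfun w y := hpos y hy
    have h2 : skLfun w y ≤ skLfun w t :=
      sk_mono hw (le_trans hs hy.1) (le_trans hs (le_trans hy.1 hy.2)) hy.2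
    have h3 : skLfun w t = -w y := by rw [sk_split hw hs hst, max_eq_right h, ← hyeq]
    linarith
  
lemma sk_cont (hw : Continuous w) : ContinuousOn (skLfun w) (Ici 0) := by
  intro t0 ht0
  rw [Metric.continuousWithinAt_iff]
  intro ε hε
  obtain ⟨δ0, hδ0, hδ⟩ := Metric.uniformContinuousOn_iff.mp
    (isCompact_Icc.uniformContinuousOn_of_continuous (hw.continuousOn (s := Icc 0 (t0 + 1))))
    (ε / 2) (by linarith)
  -- key increment bound
  have key : ∀ a b : ℝ, 0 ≤ a → a ≤ b → b ≤ t0 + 1 → b - a < δ0 →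
      skLfun w b ≤ skLfun w a + ε / 2 := by
    intro a b ha hab hb hd
    refine max_le (by linarith [sk_nonneg w a]) (csSup_le (sk_ne (le_trans ha hab)) ?_)
    rintro y ⟨u, hu, rfl⟩
    rcases le_total u a with h | h
    · have := le_csSup (sk_bdd hw 0 a) (⟨u, ⟨hu.1, h⟩, rfl⟩ :
        -w u ∈ (fun s => -w s) '' Icc 0 a)
      have h2 : sSup ((fun s => -w s) '' Icc 0 a) ≤ skLfun w a := le_max_right _ _
      linarith
    · have hua : u ∈ Icc 0 (t0 + 1) := ⟨hu.1, le_trans hu.2 hb⟩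
      have haa : a ∈ Icc 0 (t0 + 1) := ⟨ha, le_trans (le_trans h hu.2) hb⟩
      have hdist : dist u a < δ0 := by
        rw [Real.dist_eq, abs_of_nonneg (by linarith)]
        linarith [hu.2]
      have := hδ u hua a haa hdist
      rw [Real.dist_eq] at this
      have h1 : -w u ≤ -w a + ε / 2 := by
        have := abs_lt.mp this
        linarith [this.1]
      linarith [sk_neg_le hw ha]
  refine ⟨min δ0 1, lt_min hδ0 one_pos, ?_⟩
  intro x hx hxd
  have hxd0 : dist x t0 < δ0 := lt_of_lt_of_le hxd (min_le_left _ _)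
  have hxd1 : dist x t0 < 1 := lt_of_lt_of_le hxd (min_le_right _ _)
  rw [Real.dist_eq] at hxd0 hxd1 ⊢
  rcases le_total x t0 with h | h
  · have h1 : skLfun w x ≤ skLfun w t0 := sk_mono hw hx ht0 h
    have h2 : skLfun w t0 ≤ skLfun w x + ε / 2 := by
      refine key x t0 hx h (by linarith) ?_
      rw [abs_of_nonpos (by linarith)] at hxd0; linarith
    rw [abs_of_nonpos (by linarith)]; linarith
  · have h1 : skLfun w t0 ≤ skLfun w x := sk_mono hw ht0 hx h
    have h2 : skLfun w x ≤ skLfun w t0 + ε / 2 := by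
      refine key t0 x ht0 h ?_ ?_
      · rw [abs_of_nonneg (by linarith)] at hxd1; linarith
      · rw [abs_of_nonneg (by linarith)] at hxd0; linarith
    rw [abs_of_nonneg (by linarith)]; linarith

end SkorokhodAux

/-- Skorokhod reflection problem: for continuous `w` with `w(0) ≥ 0`,
the pair `z(t) = w(t) + ℓ(t)`, `ℓ(t) = max(0, max_{0≤s≤t}(-w(s)))` is the unique pair
with: `z` continuous and nonnegative on `[0,∞)`, `ℓ` continuous nondecreasing with
`ℓ(0) = 0` and increasing only at times where `z = 0`, and `z = w + ℓ`. -/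
theorem stmt13 (w : ℝ → ℝ) (hw : Continuous w) (hw0 : 0 ≤ w 0)
    (ℓ z : ℝ → ℝ)
    (hℓ : ∀ t : ℝ, ℓ t = max 0 (⨆ s : Set.Icc (0:ℝ) t, -w (s : ℝ)))
    (hz : ∀ t : ℝ, z t = w t + ℓ t) :
    -- (z, ℓ) solves the Skorokhod problem
    (ContinuousOn z (Ici 0) ∧ (∀ t : ℝ, 0 ≤ t → 0 ≤ z t)
      ∧ ContinuousOn ℓ (Ici 0) ∧ MonotoneOn ℓ (Ici 0) ∧ ℓ 0 = 0
      ∧ (∀ s t : ℝ, 0 ≤ s → s ≤ t → (∀ u ∈ Icc s t, 0 < z u) → ℓ t = ℓ s)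
      ∧ (∀ t : ℝ, 0 ≤ t → z t = w t + ℓ t))
    -- and it is the unique such pair on [0, ∞)
    ∧ (∀ z' ℓ' : ℝ → ℝ,
        ContinuousOn z' (Ici 0) → (∀ t : ℝ, 0 ≤ t → 0 ≤ z' t) →
        ContinuousOn ℓ' (Ici 0) → MonotoneOn ℓ' (Ici 0) → ℓ' 0 = 0 →
        (∀ s t : ℝ, 0 ≤ s → s ≤ t → (∀ u ∈ Icc s t, 0 < z' u) → ℓ' t = ℓ' s) →
        (∀ t : ℝ, 0 ≤ t → z' t = w t + ℓ' t) →
        ∀ t : ℝ, 0 ≤ t → z' t = z t ∧ ℓ' t = ℓ t) := by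
  -- identify ℓ with skLfun
  have hL : ∀ t : ℝ, ℓ t = skLfun w t := by
    intro t
    rw [hℓ, skLfun]
    congr 1
    rw [Set.image_eq_range]; rfl
  have hLcont : ContinuousOn ℓ (Ici 0) :=
    (sk_cont hw).congr fun t _ => hL t
  have hzL : ∀ t : ℝ, z t = w t + skLfun w t := fun t => by rw [hz, hL]
  have hznn : ∀ t : ℝ, 0 ≤ t → 0 ≤ z t := by
    intro t ht
    rw [hzL]
    linarith [sk_neg_le hw ht]
  constructor
  · refine ⟨?_, hznn, hLcont, ?_, ?_, ?_, fun t _ => hz t⟩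
    · exact (hw.continuousOn.add hLcont).congr fun t _ => hz t
    · intro s hs t ht hst
      rw [hL, hL]; exact sk_mono hw hs ht hst
    · rw [hL]; exact sk_zero hw0
    · intro s t hs hst hpos
      rw [hL, hL]
      exact sk_flat hw hs hst fun u hu => by rw [← hzL]; exact hpos u hu
  · intro z' ℓ' hz'c hz'nn hℓ'c hℓ'mono hℓ'0 hℓ'flat hz'eq
    -- it suffices to show ℓ' = ℓ on [0, ∞)
    suffices hl : ∀ t : ℝ, 0 ≤ t → ℓ' t = ℓ t by
      intro t ht
      exact ⟨by rw [hz'eq t ht, hz t, hl t ht], hl t ht⟩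
    intro t ht
    -- first inequality: ℓ ≤ ℓ'
    have hle : ∀ u : ℝ, 0 ≤ u → ℓ u ≤ ℓ' u := by
      intro u hu
      rw [hL]
      refine max_le ?_ (csSup_le (sk_ne hu) ?_)
      · rw [← hℓ'0]; exact hℓ'mono (le_refl (0:ℝ)) hu hu
      · rintro y ⟨v, hv, rfl⟩
        have h1 : 0 ≤ z' v := hz'nn v hv.1
        rw [hz'eq v hv.1] at h1
        have h2 : ℓ' v ≤ ℓ' u := hℓ'mono hv.1 hu hv.2
        show -w v ≤ ℓ' u
        linarith
    refine le_antisymm ?_ (hle t ht)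
    by_contra hlt
    push_neg at hlt
    -- the set where ℓ' ≤ ℓ on [0, t]
    set S : Set ℝ := {u | u ∈ Icc (0:ℝ) t ∧ ℓ' u - ℓ u ≤ 0} with hS
    have hSne : S.Nonempty := ⟨0, ⟨le_refl _, ht⟩, by
      rw [hℓ'0, hL, sk_zero hw0]; simp⟩
    have hScompact : IsCompact S := by
      have hcl : IsClosed S := by
        have : S = Icc 0 t ∩ (fun u => ℓ' u - ℓ u) ⁻¹' (Iic 0) := by
          ext u; simp [hS, and_comm]
        rw [this]
        refine ContinuousOn.preimage_isClosed_of_isClosed ?_ isClosed_Icc isClosed_Iic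
        exact (hℓ'c.sub hLcont).mono (fun u hu => hu.1)
      exact isCompact_Icc.of_isClosed_subset hcl fun u hu => hu.1
    set s0 : ℝ := sSup S with hs0
    have hs0mem : s0 ∈ S := hScompact.sSup_mem hSne
    have hs0le : ℓ' s0 ≤ ℓ s0 := by linarith [hs0mem.2]
    have hs0t : s0 < t := by
      rcases lt_or_eq_of_le hs0mem.1.2 with h | h
      · exact h
      · exfalso; rw [h] at hs0le; linarith
    -- z' > 0 on (s0, t]
    have hzpos : ∀ u : ℝ, u ∈ Ioc s0 t → 0 < z' u := by
      intro u hu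
      have hu0 : 0 ≤ u := le_trans hs0mem.1.1 hu.1.le
      have hnotS : u ∉ S := fun hmem => absurd (le_csSup hScompact.bddAbove hmem)
        (not_le.mpr hu.1)
      have : ¬ (ℓ' u - ℓ u ≤ 0) := fun h => hnotS ⟨⟨hu0, hu.2⟩, h⟩
      push_neg at this
      rw [hz'eq u hu0]
      have h0 : 0 ≤ z u := hznn u hu0
      rw [hz u] at h0
      linarith
    -- ℓ' is constant equal to ℓ' t on (s0, t]
    have hconst : ∀ u : ℝ, u ∈ Ioc s0 t → ℓ' u = ℓ' t := by
      intro u hu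
      exact (hℓ'flat u t (le_trans hs0mem.1.1 hu.1.le) hu.2
        fun v hv => hzpos v ⟨lt_of_lt_of_le hu.1 hv.1, hv.2⟩).symm
    -- pass to the limit u → s0⁺
    have hne : (𝓝[Ioc s0 t] s0).NeBot := by
      rw [← mem_closure_iff_nhdsWithin_neBot, closure_Ioc hs0t.ne]
      exact ⟨le_refl _, hs0t.le⟩
    have htendsto : Filter.Tendsto ℓ' (𝓝[Ioc s0 t] s0) (𝓝 (ℓ' s0)) :=
      ((hℓ'c s0 hs0mem.1.1).mono fun u hu => le_trans hs0mem.1.1 hu.1.le).tendsto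
    have htendsto2 : Filter.Tendsto ℓ' (𝓝[Ioc s0 t] s0) (𝓝 (ℓ' t)) := by
      refine Filter.Tendsto.congr' ?_ tendsto_const_nhds
      filter_upwards [self_mem_nhdsWithin] with u hu
      exact (hconst u hu).symm
    have heq : ℓ' s0 = ℓ' t := tendsto_nhds_unique htendsto htendsto2
    have : ℓ s0 ≤ ℓ t := by
      rw [hL, hL]; exact sk_mono hw hs0mem.1.1 ht hs0mem.1.2
    linarith
end

section
/- Any weak solution (X, W) of dX(t) = 1_{X(t)≥0} dW(t) with X(0) = x ≥ 0 satisfies: P(X(t) < 0) = P(X(0) < 0) = 0 for every t ≥ 0, hence X(t) ≥ 0 for Lebesgue-a.e. t almost surely; consequently X has quadratic variation ⟨X⟩(t) = t and, by Lévy's characterization, X is a standard Brownian motion — a contradiction (since Brownian motion takes negative values with positive probability). Therefore the equation dX = 1_{X≥0} dW admits no weak solution from x ≥ 0. -/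
open MeasureTheory ProbabilityTheory Set Filter

/-- `M` is (a version of) the Itô integral `t ↦ ∫₀ᵗ 1_{Y(s) ≥ 0} dB(s)`. -/
structure IsIndIntegralGe {Ω : Type*} [m : MeasurableSpace Ω] (P : Measure Ω)
    (ℱ : Filtration ℝ m) (B : ℝ → Ω → ℝ) (Y : ℝ → Ω → ℝ) (M : ℝ → Ω → ℝ) : Prop where
  init : ∀ᵐ ω ∂P, M 0 ω = 0
  cont : ∀ᵐ ω ∂P, Continuous fun t => M t ω
  adapted : Adapted ℱ M
  mart : Martingale M ℱ P
  flat : ∀ᵐ ω ∂P, ∀ s t : ℝ, 0 ≤ s → s ≤ t →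
    (∀ u ∈ Icc s t, Y u ω < 0) → M t ω = M s ω
  agrees : ∀ᵐ ω ∂P, ∀ s t : ℝ, 0 ≤ s → s ≤ t →
    (∀ u ∈ Icc s t, 0 ≤ Y u ω) → M t ω - M s ω = B t ω - B s ω

lemma stmt16_pathwise (x : ℝ) (hx : 0 ≤ x) (X M : ℝ → ℝ)
    (hc : Continuous X) (hM0 : M 0 = 0)
    (heq : ∀ t : ℝ, 0 ≤ t → X t = x + M t)
    (hflat : ∀ s t : ℝ, 0 ≤ s → s ≤ t → (∀ u ∈ Icc s t, X u < 0) → M t = M s) :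
    ∀ t : ℝ, 0 ≤ t → 0 ≤ X t := by
  by_contra h
  push_neg at h
  obtain ⟨t0, ht0, hneg⟩ := h
  have hX0 : X 0 = x := by rw [heq 0 le_rfl, hM0, add_zero]
  set A : Set ℝ := Icc 0 t0 ∩ X ⁻¹' Ici 0 with hA
  have hAne : A.Nonempty := ⟨0, ⟨le_rfl, ht0⟩, by simp [hX0, hx]⟩
  have hAbdd : BddAbove A := ⟨t0, fun s hs => hs.1.2⟩
  have hAclosed : IsClosed A := isClosed_Icc.inter (isClosed_Ici.preimage hc)
  set s₀ : ℝ := sSup A with hs₀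
  have hs₀A : s₀ ∈ A := hAclosed.csSup_mem hAne hAbdd
  have hs₀pos : 0 ≤ s₀ := hs₀A.1.1
  have hs₀le : s₀ ≤ t0 := hs₀A.1.2
  have hXs₀ : 0 ≤ X s₀ := hs₀A.2
  have hs₀lt : s₀ < t0 := lt_of_le_of_ne hs₀le (by intro h; rw [h] at hXs₀; exact absurd hXs₀ (not_le.2 hneg))
  have hnegafter : ∀ u : ℝ, s₀ < u → u ≤ t0 → X u < 0 := by
    intro u hu hut0
    by_contra hle
    push_neg at hle
    have : u ∈ A := ⟨⟨hs₀pos.trans hu.le, hut0⟩, hle⟩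
    exact absurd (le_csSup hAbdd this) (not_le.2 hu)
  have hXeq : ∀ s' : ℝ, s₀ < s' → s' ≤ t0 → X s' = X t0 := by
    intro s' hs' hs't0
    have hMeq : M t0 = M s' :=
      hflat s' t0 (hs₀pos.trans hs'.le) hs't0
        (fun u hu => hnegafter u (hs'.trans_le hu.1) hu.2)
    rw [heq s' (hs₀pos.trans hs'.le), heq t0 ht0, hMeq]
  -- X tends to X s₀ along 𝓝[>] s₀, but is eventually equal to X t0 there
  have h1 : Tendsto X (nhdsWithin s₀ (Ioi s₀)) (nhds (X s₀)) :=
    (hc.tendsto s₀).mono_left nhdsWithin_le_nhds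
  have h2 : Tendsto X (nhdsWithin s₀ (Ioi s₀)) (nhds (X t0)) := by
    refine Tendsto.congr' ?_ tendsto_const_nhds
    filter_upwards [Ioo_mem_nhdsGT_of_mem ⟨le_rfl, hs₀lt⟩] with s' hs'
    exact (hXeq s' hs'.1 hs'.2.le).symm
  have := tendsto_nhds_unique h1 h2
  rw [this] at hXs₀
  exact absurd hXs₀ (not_le.2 hneg)

/-- the equation `dX = 1_{X ≥ 0} dW` admits no weak solution started at
`x ≥ 0`: assuming one exists leads to a contradiction (any such solution would be
nonnegative for a.e. time, hence — by Lévy's characterization — a standard Brownian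
motion, which takes negative values with positive probability). -/
theorem stmt16 {Ω : Type*} [m : MeasurableSpace Ω] (P : Measure Ω) [IsProbabilityMeasure P]
    (ℱ : Filtration ℝ m) (W X M : ℝ → Ω → ℝ) (x : ℝ) (hx : 0 ≤ x)
    (hW : IsStdBrownian P ℱ W)
    (hcont : ∀ᵐ ω ∂P, Continuous fun t => X t ω) (hadapted : Adapted ℱ X)
    (hM : IsIndIntegralGe P ℱ W X M)
    (heqn : ∀ᵐ ω ∂P, ∀ t : ℝ, 0 ≤ t → X t ω = x + M t ω) :
    False := by
  -- a.s., W 1 - W 0 ≥ -x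
  have hae : ∀ᵐ ω ∂P, -x ≤ W 1 ω - W 0 ω := by
    filter_upwards [hcont, heqn, hM.flat, hM.init, hM.agrees] with ω hc heq hflat hM0 hagrees
    have hpos : ∀ t : ℝ, 0 ≤ t → 0 ≤ X t ω :=
      stmt16_pathwise x hx (fun t => X t ω) (fun t => M t ω) hc hM0 heq
        (fun s t hs hst h => hflat s t hs hst h)
    have h01 : M 1 ω - M 0 ω = W 1 ω - W 0 ω :=
      hagrees 0 1 le_rfl zero_le_one (fun u hu => hpos u hu.1)
    have hX1 : 0 ≤ X 1 ω := hpos 1 zero_le_one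
    rw [heq 1 zero_le_one] at hX1
    rw [← h01, hM0, sub_zero]
    linarith
  -- hence the Gaussian distribution of W 1 - W 0 gives zero mass to Iio (-x − 1)... contradiction
  set f : Ω → ℝ := fun ω => W 1 ω - W 0 ω with hf
  have hfm : Measurable f :=
    (((hW.adapted 1).mono (ℱ.le 1) le_rfl)).sub
      (((hW.adapted 0).mono (ℱ.le 0) le_rfl))
  have hmap : Measure.map f P = gaussianReal 0 ⟨1 - 0, sub_nonneg.2 zero_le_one⟩ :=
    hW.gauss 0 1 le_rfl zero_le_one
  have hzero : Measure.map f P (Iio (-x)) = 0 := by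
    rw [Measure.map_apply hfm measurableSet_Iio]
    rw [measure_eq_zero_iff_ae_notMem]
    filter_upwards [hae] with ω hω
    simp only [mem_preimage, mem_Iio, not_lt]
    exact hω
  have hvne : (⟨1 - 0, sub_nonneg.2 zero_le_one⟩ : NNReal) ≠ 0 := by
    intro h
    have : (1 - 0 : ℝ) = 0 := congrArg NNReal.toReal h
    norm_num at this
  have habs := gaussianReal_absolutelyContinuous' (0 : ℝ) hvne
  have : (volume : Measure ℝ) (Iio (-x)) = 0 := by
    apply habs
    rw [← hmap]
    exact hzero
  simp [Real.volume_Iio] at this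
end

section
/- Let λ < 0 and suppose Y is a weak solution of Y(t) = ξ + λt + ∫₀ᵗ 1_{Y(s)>0} dB(s) with ξ > 0 a.s. Then almost surely, once Y hits level −ε (at time σ_{-ε} := inf{t : Y(t) ≤ −ε}, ε > 0), it moves deterministically: Y(σ_{-ε} ∨ t) = Y(σ_{-ε}) + λ((σ_{-ε} ∨ t) − σ_{-ε}) for all t ≥ 0, i.e., Y decreases linearly at rate λ after σ_{-ε}. -/
open MeasureTheory ProbabilityTheory Set Filter

section Det


/-- Pathwise lower bound: `f t ≥ -(y 0)` for all `t ≥ 0`. -/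
lemma detA (y f : ℝ → ℝ) (lam : ℝ) (hlam : lam < 0) (hy : Continuous y)
    (h0 : 0 < y 0)
    (heq : ∀ t : ℝ, 0 ≤ t → y t = y 0 + lam * t + f t)
    (hflat : ∀ s t : ℝ, 0 ≤ s → s ≤ t → (∀ u ∈ Icc s t, y u ≤ 0) → f t = f s) :
    ∀ t : ℝ, 0 ≤ t → -(y 0) ≤ f t := by
  intro t ht
  have heqt := heq t ht
  by_cases hpos : 0 < y t
  · nlinarith
  push_neg at hpos
  set C : Set ℝ := {u | u ∈ Icc (0:ℝ) t ∧ 0 < y u} with hC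
  have hCne : C.Nonempty := ⟨0, ⟨le_rfl, ht⟩, h0⟩
  have hCbdd : BddAbove C := ⟨t, fun u hu => hu.1.2⟩
  set r := sSup C with hr
  have hrcl : r ∈ closure C := csSup_mem_closure hCne hCbdd
  have hrmem : r ∈ Icc (0:ℝ) t :=
    (isClosed_Icc.closure_subset_iff.2 (fun u hu => hu.1)) hrcl
  have hynn : 0 ≤ y r :=
    ((isClosed_le continuous_const hy).closure_subset_iff.2
      (fun u hu => le_of_lt hu.2)) hrcl
  have hub : ∀ u ∈ C, u ≤ r := fun u hu => le_csSup hCbdd hu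
  have hy0 : y r = 0 := by
    rcases eq_or_lt_of_le hynn with h | h
    · exact h.symm
    · exfalso
      have hrne : r ≠ t := by
        intro h'; rw [h'] at h; exact absurd h (not_lt.2 hpos)
      have hrt : r < t := lt_of_le_of_ne hrmem.2 hrne
      have hopen : IsOpen {u | 0 < y u} := isOpen_lt continuous_const hy
      rcases Metric.isOpen_iff.1 hopen r h with ⟨δ, hδ, hball⟩
      have hmpos : 0 < min (δ / 2) ((t - r) / 2) :=
        lt_min (by linarith) (by linarith)
      have hur : r < r + min (δ / 2) ((t - r) / 2) := by linarith
      have huC : r + min (δ / 2) ((t - r) / 2) ∈ C := by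
        refine ⟨⟨le_trans hrmem.1 hur.le, ?_⟩, ?_⟩
        · have : min (δ / 2) ((t - r) / 2) ≤ (t - r) / 2 := min_le_right _ _
          linarith
        · apply hball
          simp only [Metric.mem_ball, Real.dist_eq]
          have : min (δ / 2) ((t - r) / 2) ≤ δ / 2 := min_le_left _ _
          rw [add_sub_cancel_left, abs_of_pos hmpos]
          linarith
      exact absurd (hub _ huC) (not_le.2 hur)
  have hflat' : f t = f r := by
    rcases eq_or_lt_of_le hrmem.2 with h | h
    · rw [h]
    · apply hflat r t hrmem.1 hrmem.2
      intro u hu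
      rcases eq_or_lt_of_le hu.1 with h' | h'
      · rw [← h', hy0]
      · by_contra hc
        push_neg at hc
        exact absurd (hub u ⟨⟨le_trans hrmem.1 hu.1, hu.2⟩, hc⟩) (not_le.2 h')
  have heqr := heq r hrmem.1
  rw [hy0] at heqr
  have hfr : f r = -(y 0) - lam * r := by linarith
  rw [hflat', hfr]
  nlinarith [hrmem.1]

/-- Pathwise: after hitting `-ε`, the path moves linearly with slope `lam`. -/
lemma detB (y f : ℝ → ℝ) (lam : ℝ) (hlam : lam < 0) (hy : Continuous y)
    (heq : ∀ t : ℝ, 0 ≤ t → y t = y 0 + lam * t + f t)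
    (hflat : ∀ s t : ℝ, 0 ≤ s → s ≤ t → (∀ u ∈ Icc s t, y u ≤ 0) → f t = f s)
    (ε : ℝ) (hε : 0 < ε)
    (hne : {t : ℝ | 0 ≤ t ∧ y t ≤ -ε}.Nonempty) :
    ∀ t : ℝ, sInf {t : ℝ | 0 ≤ t ∧ y t ≤ -ε} ≤ t →
      y t = y (sInf {t : ℝ | 0 ≤ t ∧ y t ≤ -ε}) +
        lam * (t - sInf {t : ℝ | 0 ≤ t ∧ y t ≤ -ε}) := by
  set A : Set ℝ := {t : ℝ | 0 ≤ t ∧ y t ≤ -ε} with hA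
  have hAcl : IsClosed A := by
    rw [hA, setOf_and]
    exact (isClosed_le continuous_const continuous_id).inter
      (isClosed_le hy continuous_const)
  have hAbdd : BddBelow A := ⟨0, fun u hu => hu.1⟩
  set S := sInf A with hS
  have hSA : S ∈ A := hAcl.csInf_mem hne hAbdd
  have hS0 : 0 ≤ S := hSA.1
  have hySneg : y S < 0 := lt_of_le_of_lt hSA.2 (by linarith)
  have hneg : ∀ u : ℝ, S ≤ u → y u < 0 := by
    by_contra hc
    push_neg at hc
    obtain ⟨u₀, hu₀S, hu₀⟩ := hc
    set Bs : Set ℝ := {u : ℝ | S ≤ u ∧ 0 ≤ y u} with hBs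
    have hBne : Bs.Nonempty := ⟨u₀, hu₀S, hu₀⟩
    have hBcl : IsClosed Bs := by
      rw [hBs, setOf_and]
      exact (isClosed_le continuous_const continuous_id).inter
        (isClosed_le continuous_const hy)
    have hBbdd : BddBelow Bs := ⟨S, fun u hu => hu.1⟩
    set T := sInf Bs with hT
    have hTB : T ∈ Bs := hBcl.csInf_mem hBne hBbdd
    have hSTne : S ≠ T := fun h => absurd hTB.2 (not_le.2 (h ▸ hySneg))
    have hST : S < T := lt_of_le_of_ne hTB.1 hSTne
    have hnegI : ∀ u ∈ Ico S T, y u < 0 := by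
      intro u hu
      by_contra hcu
      push_neg at hcu
      exact absurd (csInf_le hBbdd ⟨hu.1, hcu⟩) (not_le.2 hu.2)
    have hlin : ∀ u ∈ Ico S T, y u = y S + lam * (u - S) := by
      intro u hu
      have hfu : f u = f S := by
        apply hflat S u hS0 hu.1
        intro w hw
        exact le_of_lt (hnegI w ⟨hw.1, lt_of_le_of_lt hw.2 hu.2⟩)
      have h1 := heq u (le_trans hS0 hu.1)
      have h2 := heq S hS0
      rw [hfu] at h1
      linarith
    have hTlin : y T = y S + lam * (T - S) := by
      have hsub : closure (Ico S T) ⊆ {u : ℝ | y u = y S + lam * (u - S)} :=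
        (isClosed_eq hy (continuous_const.add
          (continuous_const.mul (continuous_id.sub continuous_const)))).closure_subset_iff.2 hlin
      have hTcl : T ∈ closure (Ico S T) := by
        rw [closure_Ico hST.ne]
        exact ⟨hST.le, le_rfl⟩
      exact hsub hTcl
    have : y T < 0 := by nlinarith
    exact absurd hTB.2 (not_le.2 this)
  intro t hSt
  have hfu : f t = f S := by
    apply hflat S t hS0 hSt
    intro w hw
    exact le_of_lt (hneg w hw.1)
  have h1 := heq t (le_trans hS0 hSt)
  have h2 := heq S hS0
  rw [hfu] at h1
  linarith

end Det

/-- A.s. the process hits the level `-ε` at some nonnegative rational time. -/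
lemma hits_neg_level {Ω : Type*} [m : MeasurableSpace Ω] (P : Measure Ω)
    [IsProbabilityMeasure P]
    (ℱ : Filtration ℝ m) (lam : ℝ) (hlam : lam < 0)
    (B : ℝ → Ω → ℝ) (ξ : Ω → ℝ) (Y : ℝ → Ω → ℝ) (M : ℝ → Ω → ℝ)
    (hsol : WeakSolution P ℱ lam B ξ Y M)
    (hξ : ∀ᵐ ω ∂P, 0 < ξ ω) (ε : ℝ) (hε : 0 < ε) :
    ∀ᵐ ω ∂P, ∃ q : ℚ, 0 ≤ (q : ℝ) ∧ Y (q : ℝ) ω < -ε := by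
  have hYm : ∀ t : ℝ, Measurable (Y t) :=
    fun t => (hsol.adaptedY t).mono (ℱ.le t) le_rfl
  set N : Set Ω := ⋂ q : ℚ, {ω | 0 ≤ (q : ℝ) → -ε ≤ Y (q : ℝ) ω} with hN
  have hNm : MeasurableSet N := by
    apply MeasurableSet.iInter
    intro q
    by_cases hq : 0 ≤ (q : ℝ)
    · simp only [hq, true_implies]
      exact measurableSet_le measurable_const (hYm _)
    · simp only [hq, false_implies, setOf_true]
      exact MeasurableSet.univ
  -- the pathwise good set
  have hgood : ∀ᵐ ω ∂P, (Continuous fun t => Y t ω) ∧ 0 < Y 0 ω ∧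
      (∀ t : ℝ, 0 ≤ t → Y t ω = Y 0 ω + lam * t + M t ω) ∧
      (∀ s t : ℝ, 0 ≤ s → s ≤ t → (∀ u ∈ Icc s t, Y u ω ≤ 0) → M t ω = M s ω) := by
    filter_upwards [hsol.contY, hsol.init, hξ, hsol.eqn, hsol.integral.flat]
      with ω hc hi hp he hf
    exact ⟨hc, hi ▸ hp, fun t ht => by rw [hi]; exact he t ht, hf⟩
  -- for each K, P ({Y 0 ≤ K} ∩ N) = 0
  have hKnull : ∀ K : ℕ, P ({ω | Y 0 ω ≤ (K : ℝ)} ∩ N) = 0 := by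
    intro K
    by_contra hcon
    set E : Set Ω := {ω | Y 0 ω ≤ (K : ℝ)} with hE
    have hEf : MeasurableSet[ℱ 0] E := (hsol.adaptedY 0) measurableSet_Iic
    have hEm : MeasurableSet E := ℱ.le 0 _ hEf
    set a : ℝ := (P (E ∩ N)).toReal with ha
    have hapos : 0 < a := ENNReal.toReal_pos hcon (measure_ne_top P _)
    obtain ⟨n, hn⟩ := exists_nat_gt (((K : ℝ) + a * (ε + K)) / (a * (-lam)))
    have hn0 : (0 : ℝ) ≤ (n : ℝ) := Nat.cast_nonneg n
    have hint : Integrable (M (n : ℝ)) P := hsol.integral.mart.integrable (n : ℝ)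
    -- martingale property
    have hmart : ∫ ω in E, M (n : ℝ) ω ∂P = ∫ ω in E, M 0 ω ∂P :=
      (hsol.integral.mart.setIntegral_eq hn0 hEf).symm
    have hzero : ∫ ω in E, M 0 ω ∂P = 0 := by
      rw [setIntegral_congr_ae hEm
        (hsol.integral.init.mono (fun ω h _ => h))]
      simp
    -- split the integral
    have hsplit : ∫ ω in E ∩ N, M (n : ℝ) ω ∂P + ∫ ω in E \ N, M (n : ℝ) ω ∂P
        = ∫ ω in E, M (n : ℝ) ω ∂P :=
      integral_inter_add_diff hNm hint.integrableOn
    -- bound on E ∩ N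
    have hb1ae : ∀ᵐ ω ∂P, ω ∈ E ∩ N → -ε - K - lam * n ≤ M (n : ℝ) ω := by
      filter_upwards [hgood] with ω hg hmem
      obtain ⟨hc, hp, he, hf⟩ := hg
      have hYn : -ε ≤ Y (n : ℝ) ω := by
        have := mem_iInter.1 hmem.2 (n : ℚ)
        simpa using this
      have := he (n : ℝ) hn0
      have hY0 : Y 0 ω ≤ K := hmem.1
      linarith
    have hb2ae : ∀ᵐ ω ∂P, ω ∈ E \ N → -(K : ℝ) ≤ M (n : ℝ) ω := by
      filter_upwards [hgood] with ω hg hmem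
      obtain ⟨hc, hp, he, hf⟩ := hg
      have := detA (fun t => Y t ω) (fun t => M t ω) lam hlam hc hp he hf (n : ℝ) hn0
      have hY0 : Y 0 ω ≤ K := hmem.1
      linarith
    have hb1 : (-ε - K - lam * n) * a ≤ ∫ ω in E ∩ N, M (n : ℝ) ω ∂P := by
      have := setIntegral_mono_ae_restrict
        (integrableOn_const (measure_ne_top P _))
        (hint.integrableOn (s := E ∩ N))
        ((ae_restrict_iff' (hEm.inter hNm)).2 hb1ae)
      rwa [setIntegral_const, measureReal_def, smul_eq_mul, mul_comm] at this
    have hb2 : -(K : ℝ) ≤ ∫ ω in E \ N, M (n : ℝ) ω ∂P := by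
      have hle := setIntegral_mono_ae_restrict
        (integrableOn_const (measure_ne_top P _))
        (hint.integrableOn (s := E \ N))
        ((ae_restrict_iff' (hEm.diff hNm)).2 hb2ae)
      rw [setIntegral_const, measureReal_def, smul_eq_mul] at hle
      have h1 : (P (E \ N)).toReal ≤ 1 := by
        have hple := prob_le_one (μ := P) (s := E \ N)
        have h2 := ENNReal.toReal_mono ENNReal.one_ne_top hple
        simpa using h2
      have h0 : (0 : ℝ) ≤ (P (E \ N)).toReal := ENNReal.toReal_nonneg
      nlinarith [Nat.cast_nonneg (α := ℝ) K]
    -- combine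
    have hcomb : (-ε - K - lam * n) * a - K ≤ 0 := by
      have := hsplit
      rw [hmart, hzero] at this
      linarith
    have hdiv : ((K : ℝ) + a * (ε + K)) < (n : ℝ) * (a * (-lam)) :=
      (div_lt_iff₀ (by nlinarith)).1 hn
    nlinarith
  -- conclude
  have hUnull : P (⋃ K : ℕ, {ω | Y 0 ω ≤ (K : ℝ)} ∩ N) = 0 :=
    measure_iUnion_null hKnull
  have hae := (measure_eq_zero_iff_ae_notMem (μ := P)).1 hUnull
  filter_upwards [hae] with ω hω
  obtain ⟨K, hK⟩ := exists_nat_ge (Y 0 ω)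
  have hnotin : ω ∉ ({ω | Y 0 ω ≤ (K : ℝ)} ∩ N) := by
    intro hmem
    exact hω (mem_iUnion.2 ⟨K, hmem⟩)
  have hωN : ω ∉ N := fun hN' => hnotin ⟨hK, hN'⟩
  rw [hN, mem_iInter] at hωN
  push_neg at hωN
  obtain ⟨q, hq⟩ := hωN
  rw [mem_setOf_eq] at hq
  push_neg at hq
  exact ⟨q, hq.1, hq.2⟩

/-- for λ < 0 and a weak solution `Y` of `Y = ξ + λt + ∫ 1_{Y>0} dB` with
`ξ > 0` a.s., once `Y` hits level `-ε` (at time `σ_{-ε} = inf{t ≥ 0 : Y(t) ≤ -ε}`) it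
moves deterministically: `Y(σ_{-ε} ∨ t) = Y(σ_{-ε}) + λ((σ_{-ε} ∨ t) - σ_{-ε})`
for all `t ≥ 0`, almost surely. -/
theorem stmt19 {Ω : Type*} [m : MeasurableSpace Ω] (P : Measure Ω) [IsProbabilityMeasure P]
    (ℱ : Filtration ℝ m) (lam : ℝ) (hlam : lam < 0)
    (B : ℝ → Ω → ℝ) (ξ : Ω → ℝ) (Y : ℝ → Ω → ℝ) (M : ℝ → Ω → ℝ)
    (hsol : WeakSolution P ℱ lam B ξ Y M)
    (hξ : ∀ᵐ ω ∂P, 0 < ξ ω)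
    (σe : ℝ → Ω → ℝ)
    (hσe : ∀ (ε : ℝ) (ω : Ω), σe ε ω = sInf {t : ℝ | 0 ≤ t ∧ Y t ω ≤ -ε}) :
    ∀ ε : ℝ, 0 < ε →
      ∀ᵐ ω ∂P, ∀ t : ℝ, 0 ≤ t →
        Y (max (σe ε ω) t) ω
          = Y (σe ε ω) ω + lam * (max (σe ε ω) t - σe ε ω) := by
  intro ε hε
  filter_upwards [hits_neg_level P ℱ lam hlam B ξ Y M hsol hξ ε hε,
    hsol.contY, hsol.init, hξ, hsol.eqn, hsol.integral.flat]
    with ω hhit hc hi hp he hf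
  intro t ht
  have heq' : ∀ u : ℝ, 0 ≤ u → Y u ω = Y 0 ω + lam * u + M u ω :=
    fun u hu => by rw [hi]; exact he u hu
  obtain ⟨q, hq0, hqlt⟩ := hhit
  have hne : {u : ℝ | 0 ≤ u ∧ Y u ω ≤ -ε}.Nonempty := ⟨(q : ℝ), hq0, le_of_lt hqlt⟩
  have key := detB (fun u => Y u ω) (fun u => M u ω) lam hlam hc heq' hf ε hε hne
  rw [hσe]
  exact key (max (sInf {u : ℝ | 0 ≤ u ∧ Y u ω ≤ -ε}) t) (le_max_left _ _)
end
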